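/- arXiv:1812.08809 — 9 statements merged into one kernel-verified Lean document; each statement's English description precedes it below -/
import Mathlib

section
/- If T and all H_1, ..., H_t are strong digraphs, each of order at least 2, and t ≥ 2, then the composition Q = T[H_1, ..., H_t] has a pair of arc-disjoint strong spanning subdigraphs. -/
/-- A digraph (given by its arc relation) is strong (strongly connected). -/
def IsStrong {V : Type*} (A : V → V → Prop) : Prop :=
  ∀ x y : V, Relation.ReflTransGen A x y

/-- `A` has a pair of arc-disjoint strong spanning subdigraphs (a good decomposition). -/
def GoodDecomp {V : Type*} (A : V → V → Prop) : Prop :=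
  ∃ A₁ A₂ : V → V → Prop,
    (∀ x y, A₁ x y → A x y) ∧ (∀ x y, A₂ x y → A x y) ∧
    (∀ x y, ¬ (A₁ x y ∧ A₂ x y)) ∧ IsStrong A₁ ∧ IsStrong A₂

/-- Arc relation of the composition `T[H_1, ..., H_t]`. -/
def CompArc {t : ℕ} {Vt : Fin t → Type*} (T : Fin t → Fin t → Prop)
    (H : ∀ i, Vt i → Vt i → Prop) : (Σ i, Vt i) → (Σ i, Vt i) → Prop :=
  fun a b => T a.1 b.1 ∨ ∃ h : a.1 = b.1, H b.1 (h ▸ a.2) b.2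


/-- The cyclic successor on `Fin n`. -/
def finSucc {n : ℕ} (x : Fin n) : Fin n := ⟨(x.val + 1) % n, Nat.mod_lt _ x.pos⟩

def Semicomplete {V : Type*} (A : V → V → Prop) : Prop :=
  ∀ x y : V, x ≠ y → A x y ∨ A y x

/-- `A` is 2-arc-strong: it stays strong after deleting any set of at most one arc. -/
def TwoArcStrong {V : Type*} (A : V → V → Prop) : Prop :=
  ∀ X : Set (V × V), X.Subsingleton → IsStrong (fun x y => A x y ∧ (x, y) ∉ X)

/-- Digraph isomorphism. -/
def DIso {V W : Type*} (A : V → V → Prop) (B : W → W → Prop) : Prop :=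
  ∃ e : V ≃ W, ∀ x y, A x y ↔ B (e x) (e y)

/-- Arc relation of the directed cycle on `n` vertices. -/
def CycleArc (n : ℕ) : Fin n → Fin n → Prop := fun x y => y = finSucc x

/-- `T` (on `Fin t`) has a Hamiltonian cycle. -/
def HasHamCycle {t : ℕ} (T : Fin t → Fin t → Prop) : Prop :=
  ∃ e : Equiv.Perm (Fin t), ∀ i, T (e i) (e (finSucc i))

/-- Cartesian product of digraphs. -/
def CartProd {V W : Type*} (A : V → V → Prop) (B : W → W → Prop) :
    V × W → V × W → Prop :=
  fun p q => (A p.1 q.1 ∧ p.2 = q.2) ∨ (p.1 = q.1 ∧ B p.2 q.2)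

/-- Strong product of digraphs. -/
def StrongProd {V W : Type*} (A : V → V → Prop) (B : W → W → Prop) :
    V × W → V × W → Prop :=
  fun p q => (A p.1 q.1 ∧ p.2 = q.2) ∨ (p.1 = q.1 ∧ B p.2 q.2) ∨ (A p.1 q.1 ∧ B p.2 q.2)

/-- Lexicographic product of digraphs. -/
def LexProd {V W : Type*} (A : V → V → Prop) (B : W → W → Prop) :
    V × W → V × W → Prop :=
  fun p q => A p.1 q.1 ∨ (p.1 = q.1 ∧ B p.2 q.2)

/-- `k`-th Cartesian power of a digraph. -/
def CartPow {V : Type*} (A : V → V → Prop) (k : ℕ) :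
    (Fin k → V) → (Fin k → V) → Prop :=
  fun f g => ∃ i, A (f i) (g i) ∧ ∀ j, j ≠ i → f j = g j

/-- `A` has a collection of pairwise arc-disjoint directed cycles covering all vertices. -/
def HasCycleCover {V : Type*} (A : V → V → Prop) : Prop :=
  ∃ (k : ℕ) (m : Fin k → ℕ) (c : ∀ i : Fin k, Fin (m i) → V),
    (∀ i, 2 ≤ m i) ∧ (∀ i, Function.Injective (c i)) ∧
    (∀ i x, A (c i x) (c i (finSucc x))) ∧
    (∀ i j x y, c i x = c j y → c i (finSucc x) = c j (finSucc y) → i = j) ∧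
    (∀ v : V, ∃ i x, c i x = v)

/-- The digraph `C3[K2bar, K2bar, K2bar]`. -/
def Exc1 : Fin 3 × Fin 2 → Fin 3 × Fin 2 → Prop := fun p q => q.1 = finSucc p.1

/-- The digraph `C3[P2, K2bar, K2bar]`, the single arc of `P2` being `(0,0) → (0,1)`. -/
def Exc2 : Fin 3 × Fin 2 → Fin 3 × Fin 2 → Prop :=
  fun p q => q.1 = finSucc p.1 ∨ (p.1 = 0 ∧ q.1 = 0 ∧ p.2 = 0 ∧ q.2 = 1)

/-- Block index for `C3[K2bar, K2bar, K3bar]`. -/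
def blk : (Fin 2 ⊕ Fin 2 ⊕ Fin 3) → Fin 3 :=
  Sum.elim (fun _ => 0) (Sum.elim (fun _ => 1) (fun _ => 2))

/-- The digraph `C3[K2bar, K2bar, K3bar]`. -/
def Exc3 : (Fin 2 ⊕ Fin 2 ⊕ Fin 3) → (Fin 2 ⊕ Fin 2 ⊕ Fin 3) → Prop :=
  fun p q => blk q = finSucc (blk p)

/-- `S4`: the complete digraph on 4 vertices minus the directed 4-cycle `x → x+1`. -/
def S4Arc : Fin 4 → Fin 4 → Prop := fun x y => x ≠ y ∧ y ≠ finSucc x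

theorem stmt_1 {t : ℕ} (ht : 2 ≤ t) {Vt : Fin t → Type*} [∀ i, Fintype (Vt i)]
    (T : Fin t → Fin t → Prop) (hT : Irreflexive T) (hTs : IsStrong T)
    (H : ∀ i, Vt i → Vt i → Prop) (hH : ∀ i, Irreflexive (H i))
    (hcard : ∀ i, 2 ≤ Fintype.card (Vt i)) (hHs : ∀ i, IsStrong (H i)) :
    GoodDecomp (CompArc T H) := by
  classical
  -- pick two distinct vertices in each block
  have hex : ∀ i, ∃ x y : Vt i, x ≠ y := by
    intro i
    have := Fintype.one_lt_card_iff_nontrivial.mp (hcard i)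
    exact exists_pair_ne (Vt i)
  choose a b hab using hex
  -- every vertex of `Fin t` has a distinct partner
  have hnontriv : ∀ i : Fin t, ∃ k : Fin t, k ≠ i := by
    intro i
    haveI : Nontrivial (Fin t) := by
      rw [Fin.nontrivial_iff_two_le]; exact ht
    exact exists_ne i
  -- out- and in-neighbours in T
  have hout : ∀ i : Fin t, ∃ j, T i j := by
    intro i
    obtain ⟨k, hk⟩ := hnontriv i
    rcases (hTs i k).cases_head with h | ⟨c, hc, -⟩
    · exact absurd h.symm hk
    · exact ⟨c, hc⟩
  have hin : ∀ p : Fin t, ∃ j, T j p := by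
    intro p
    obtain ⟨k, hk⟩ := hnontriv p
    rcases (hTs k p).cases_tail with h | ⟨c, -, hc⟩
    · exact absurd h.symm hk
    · exact ⟨c, hc⟩
  set A₁ : (Σ i, Vt i) → (Σ i, Vt i) → Prop :=
    fun x y => (∃ h : x.1 = y.1, H y.1 (h ▸ x.2) y.2) ∨
      (T x.1 y.1 ∧ x.2 = a x.1 ∧ y.2 = a y.1) with hA₁
  set A₂ : (Σ i, Vt i) → (Σ i, Vt i) → Prop :=
    fun x y => T x.1 y.1 ∧ ¬(x.2 = a x.1 ∧ y.2 = a y.1) with hA₂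
  refine ⟨A₁, A₂, ?_, ?_, ?_, ?_, ?_⟩
  · rintro x y (⟨h, hh⟩ | ⟨h, -, -⟩)
    · exact Or.inr ⟨h, hh⟩
    · exact Or.inl h
  · rintro x y ⟨h, -⟩
    exact Or.inl h
  · rintro x y ⟨(⟨h, -⟩ | ⟨-, h1, h2⟩), hT2, hna⟩
    · rw [h] at hT2; exact hT _ hT2
    · exact hna ⟨h1, h2⟩
  · -- A₁ strong
    rintro ⟨i, u⟩ ⟨p, v⟩
    have lifth : ∀ (j : Fin t) (u v : Vt j),
        Relation.ReflTransGen A₁ ⟨j, u⟩ ⟨j, v⟩ := by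
      intro j u v
      exact Relation.ReflTransGen.lift (fun w => (⟨j, w⟩ : Σ i, Vt i))
        (fun u v huv => Or.inl ⟨rfl, huv⟩) _ _ (hHs j u v)
    have liftT : Relation.ReflTransGen A₁ ⟨i, a i⟩ ⟨p, a p⟩ :=
      Relation.ReflTransGen.lift (fun j => (⟨j, a j⟩ : Σ i, Vt i))
        (fun j k hjk => Or.inr ⟨hjk, rfl, rfl⟩) _ _ (hTs i p)
    exact ((lifth i u (a i)).trans liftT).trans (lifth p (a p) v)
  · -- A₂ strong
    rintro ⟨i, u⟩ ⟨p, v⟩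
    obtain ⟨j₁, hj₁⟩ := hout i
    obtain ⟨j₂, hj₂⟩ := hin p
    have step1 : A₂ ⟨i, u⟩ ⟨j₁, b j₁⟩ :=
      ⟨hj₁, fun hc => hab j₁ hc.2.symm⟩
    have step3 : A₂ ⟨j₂, b j₂⟩ ⟨p, v⟩ :=
      ⟨hj₂, fun hc => hab j₂ hc.1.symm⟩
    have step2 : Relation.ReflTransGen A₂ ⟨j₁, b j₁⟩ ⟨j₂, b j₂⟩ :=
      Relation.ReflTransGen.lift (fun j => (⟨j, b j⟩ : Σ i, Vt i))
        (fun j k hjk => ⟨hjk, fun hc => hab j hc.1.symm⟩) _ _ (hTs j₁ j₂)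
    exact (Relation.ReflTransGen.head step1 step2).tail step3
end

section
/- If T is a Hamiltonian digraph on an even number t ≥ 2 of vertices and H_1, ..., H_t are arbitrary digraphs each with at least 2 vertices, then the composition Q = T[H_1, ..., H_t] has a pair of arc-disjoint strong spanning subdigraphs. -/
namespace Stmt2Aux

variable {t : ℕ} {Vt : Fin t → Type*}

/-- cyclic predecessor -/
def finPred {n : ℕ} (x : Fin n) : Fin n := ⟨(x.val + (n - 1)) % n, Nat.mod_lt _ x.pos⟩

lemma finSucc_finPred {n : ℕ} (x : Fin n) : finSucc (finPred x) = x := by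
  have h1 : ((x.val + (n - 1)) % n + 1) % n = (x.val + (n - 1) + 1) % n := Nat.mod_add_mod _ _ _
  have h2 : x.val + (n - 1) + 1 = x.val + n := by have := x.pos; omega
  apply Fin.ext
  show ((x.val + (n - 1)) % n + 1) % n = x.val
  rw [h1, h2, Nat.add_mod_right, Nat.mod_eq_of_lt x.isLt]

lemma finSucc_mk {n m : ℕ} (h : m + 1 < n) (hm : m < n) :
    finSucc (⟨m, hm⟩ : Fin n) = ⟨m + 1, h⟩ := by
  apply Fin.ext
  exact Nat.mod_eq_of_lt h

lemma finSucc_last {n : ℕ} (hn : 0 < n) (h : n - 1 < n) :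
    finSucc (⟨n - 1, h⟩ : Fin n) = ⟨0, hn⟩ := by
  apply Fin.ext
  show (n - 1 + 1) % n = 0
  have : n - 1 + 1 = n := by omega
  rw [this, Nat.mod_self]

section

variable (e : Equiv.Perm (Fin t)) (a b : ∀ j, Vt j)

/-- position of a vertex along the Hamiltonian cycle -/
def pos (x : (i : Fin t) × Vt i) : Fin t := e.symm x.1

/-- chosen vertex of parity `s` at position `k` -/
def cpos (s : Bool) (k : Fin t) : (i : Fin t) × Vt i :=
  ⟨e k, if s then a (e k) else b (e k)⟩

open Classical in
/-- which chosen vertex (if any) a vertex is -/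
noncomputable def kind (x : (i : Fin t) × Vt i) : Option Bool :=
  if x.2 = a x.1 then some true else if x.2 = b x.1 then some false else none

/-- the two arc sets, parametrized by σ -/
def Rel (σ : Bool) (x y : (i : Fin t) × Vt i) : Prop :=
  pos e y = finSucc (pos e x) ∧
    ((∃ s, kind a b x = some s ∧
        kind a b y = some (xor s (xor σ (decide ((pos e x).val = t - 1)))))
     ∨ (kind a b x = some (!σ) ∧ kind a b y = none)
     ∨ (kind a b x = none ∧ kind a b y = some (!σ)))

variable (hab : ∀ j, a j ≠ b j)

lemma pos_cpos (s : Bool) (k : Fin t) : pos e (cpos e a b s k) = k :=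
  e.symm_apply_apply k

include hab in
lemma kind_cpos (s : Bool) (k : Fin t) : kind a b (cpos e a b s k) = some s := by
  cases s <;> simp [kind, cpos, hab (e k), (hab (e k)).symm]

lemma eq_cpos_of_kind {x : (i : Fin t) × Vt i} {s : Bool} (h : kind a b x = some s) :
    x = cpos e a b s (pos e x) := by
  obtain ⟨j, v⟩ := x
  unfold kind at h
  have hj : e (e.symm j) = j := e.apply_symm_apply j
  by_cases h1 : v = a j
  · rw [if_pos h1] at h
    obtain rfl : true = s := Option.some.inj h
    subst h1
    exact (congrArg (fun i => (⟨i, if true then a i else b i⟩ : (i : Fin t) × Vt i)) hj).symm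
  · rw [if_neg h1] at h
    by_cases h2 : v = b j
    · rw [if_pos h2] at h
      obtain rfl : false = s := Option.some.inj h
      subst h2
      exact (congrArg (fun i => (⟨i, if false then a i else b i⟩ : (i : Fin t) × Vt i)) hj).symm
    · rw [if_neg h2] at h; exact absurd h (by simp)

include hab

lemma arcMatch (σ s : Bool) (k : Fin t) :
    Rel e a b σ (cpos e a b s k)
      (cpos e a b (xor s (xor σ (decide (k.val = t - 1)))) (finSucc k)) := by
  refine ⟨?_, Or.inl ⟨s, kind_cpos e a b hab s k, ?_⟩⟩
  · rw [pos_cpos, pos_cpos]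
  · rw [kind_cpos e a b hab, pos_cpos]

lemma arcPendOut (σ : Bool) {x : (i : Fin t) × Vt i} (hx : kind a b x = none) :
    Rel e a b σ x (cpos e a b (!σ) (finSucc (pos e x))) :=
  ⟨by rw [pos_cpos], Or.inr (Or.inr ⟨hx, by rw [kind_cpos e a b hab]⟩)⟩

lemma arcPendIn (σ : Bool) {y : (i : Fin t) × Vt i} (hy : kind a b y = none) :
    Rel e a b σ (cpos e a b (!σ) (finPred (pos e y))) y := by
  refine ⟨?_, Or.inr (Or.inl ⟨by rw [kind_cpos e a b hab], hy⟩)⟩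
  rw [pos_cpos, finSucc_finPred]

lemma chain (σ : Bool) : ∀ (m n : ℕ) (hnm : n + m < t) (s : Bool),
    Relation.ReflTransGen (Rel e a b σ)
      (cpos e a b s ⟨n, by omega⟩)
      (cpos e a b (xor s (σ && decide (m % 2 = 1))) ⟨n + m, hnm⟩) := by
  intro m
  induction m with
  | zero =>
    intro n hnm s
    have h0 : (decide (0 % 2 = 1)) = false := by decide
    simp only [Nat.add_zero, h0, Bool.and_false, Bool.xor_false]
    exact Relation.ReflTransGen.refl
  | succ m ih =>
    intro n hnm s
    have hn1 : n + 1 < t := by omega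
    have harc := arcMatch e a b hab σ s ⟨n, by omega⟩
    have hne : decide ((⟨n, by omega⟩ : Fin t).val = t - 1) = false := by
      apply decide_eq_false; show ¬ n = t - 1; omega
    rw [hne] at harc
    have hfs : finSucc (⟨n, by omega⟩ : Fin t) = ⟨n + 1, hn1⟩ := finSucc_mk hn1 (by omega)
    rw [hfs] at harc
    have ih' := ih (n + 1) (by omega) (xor s (xor σ false))
    refine Relation.ReflTransGen.head harc ?_
    convert ih' using 2
    · cases s <;> cases σ <;> rcases Nat.even_or_odd m with hm | hm <;>
        · first
          | (simp [Nat.even_iff.mp hm, Nat.succ_mod_two_eq_one_iff.mpr (Nat.even_iff.mp hm)])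
          | (simp [Nat.odd_iff.mp hm, Nat.succ_mod_two_eq_zero_iff.mpr (Nat.odd_iff.mp hm)])
    · apply Fin.ext; show n + (m + 1) = n + 1 + m; omega

variable (hte : Even t)

include hte

lemma loop (σ s : Bool) (h0 : 0 < t) :
    Relation.ReflTransGen (Rel e a b σ)
      (cpos e a b s ⟨0, h0⟩) (cpos e a b (!s) ⟨0, h0⟩) := by
  have hlt : t - 1 < t := by omega
  have hodd : (t - 1) % 2 = 1 := by
    obtain ⟨c, hc2⟩ := hte
    rcases Nat.eq_zero_or_pos t with h | h
    · omega
    · omega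
  have hc := chain e a b hab σ (t - 1) 0 (by omega) s
  have harc := arcMatch e a b hab σ (xor s σ) ⟨t - 1, hlt⟩
  rw [show (decide ((⟨t - 1, hlt⟩ : Fin t).val = t - 1)) = true from decide_eq_true rfl] at harc
  rw [finSucc_last h0 hlt] at harc
  rw [show xor (xor s σ) (xor σ true) = !s from by cases s <;> cases σ <;> rfl] at harc
  refine Relation.ReflTransGen.tail ?_ harc
  convert hc using 2
  · simp [hodd]
  · apply Fin.ext
    simp

lemma zero_to_zero (σ s s' : Bool) (h0 : 0 < t) :
    Relation.ReflTransGen (Rel e a b σ)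
      (cpos e a b s ⟨0, h0⟩) (cpos e a b s' ⟨0, h0⟩) := by
  by_cases h : s = s'
  · subst h; exact Relation.ReflTransGen.refl
  · rw [show s' = !s from by cases s <;> cases s' <;> simp_all]
    exact loop e a b hab hte σ s h0

lemma zero_reach (σ s s' : Bool) (k : Fin t) (h0 : 0 < t) :
    Relation.ReflTransGen (Rel e a b σ)
      (cpos e a b s ⟨0, h0⟩) (cpos e a b s' k) := by
  have hc := chain e a b hab σ k.val 0 (by have := k.isLt; omega)
      (xor s' (σ && decide (k.val % 2 = 1)))
  refine Relation.ReflTransGen.trans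
    (zero_to_zero e a b hab hte σ s (xor s' (σ && decide (k.val % 2 = 1))) h0) ?_
  convert hc using 2
  · cases s' <;> cases (σ && decide (k.val % 2 = 1)) <;> rfl
  · apply Fin.ext
    simp

lemma reach_zero (σ s s' : Bool) (k : Fin t) (h0 : 0 < t) :
    Relation.ReflTransGen (Rel e a b σ)
      (cpos e a b s k) (cpos e a b s' ⟨0, h0⟩) := by
  have hlt : t - 1 < t := by omega
  have hc := chain e a b hab σ (t - 1 - k.val) k.val (by have := k.isLt; omega) s
  have hc' : Relation.ReflTransGen (Rel e a b σ) (cpos e a b s k)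
      (cpos e a b (xor s (σ && decide ((t - 1 - k.val) % 2 = 1))) ⟨t - 1, hlt⟩) := by
    convert hc using 2
    apply Fin.ext
    show t - 1 = k.val + (t - 1 - k.val)
    have := k.isLt; omega
  have harc := arcMatch e a b hab σ (xor s (σ && decide ((t - 1 - k.val) % 2 = 1))) ⟨t - 1, hlt⟩
  rw [show (decide ((⟨t - 1, hlt⟩ : Fin t).val = t - 1)) = true from decide_eq_true rfl] at harc
  rw [finSucc_last h0 hlt] at harc
  exact Relation.ReflTransGen.trans (Relation.ReflTransGen.tail hc' harc)
    (zero_to_zero e a b hab hte σ _ s' h0)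

lemma strongRel (σ : Bool) (h0 : 0 < t) : IsStrong (Rel e a b σ) := by
  intro x y
  have hx2hub : Relation.ReflTransGen (Rel e a b σ) x (cpos e a b (!σ) ⟨0, h0⟩) := by
    cases hx : kind a b x with
    | some s =>
      rw [eq_cpos_of_kind e a b hx]
      exact reach_zero e a b hab hte σ s (!σ) _ h0
    | none =>
      exact Relation.ReflTransGen.head (arcPendOut e a b hab σ hx)
        (reach_zero e a b hab hte σ (!σ) (!σ) _ h0)
  have hhub2y : Relation.ReflTransGen (Rel e a b σ) (cpos e a b (!σ) ⟨0, h0⟩) y := by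
    cases hy : kind a b y with
    | some s =>
      rw [eq_cpos_of_kind e a b hy]
      exact zero_reach e a b hab hte σ (!σ) s _ h0
    | none =>
      exact Relation.ReflTransGen.tail
        (zero_reach e a b hab hte σ (!σ) (!σ) (finPred (pos e y)) h0)
        (arcPendIn e a b hab σ hy)
  exact Relation.ReflTransGen.trans hx2hub hhub2y

omit hab hte

lemma disjRel (x y : (i : Fin t) × Vt i) :
    ¬ (Rel e a b false x y ∧ Rel e a b true x y) := by
  rintro ⟨⟨-, h1⟩, ⟨-, h2⟩⟩
  generalize (decide ((pos e x).val = t - 1)) = d at h1 h2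
  rcases h1 with ⟨s, hx1, hy1⟩ | ⟨hx1, hy1⟩ | ⟨hx1, hy1⟩ <;>
    rcases h2 with ⟨s2, hx2, hy2⟩ | ⟨hx2, hy2⟩ | ⟨hx2, hy2⟩ <;>
      rw [hx1] at hx2 <;> rw [hy1] at hy2 <;> cases d <;> simp_all

lemma relSub (σ : Bool) (T : Fin t → Fin t → Prop) (H : ∀ i, Vt i → Vt i → Prop)
    (he : ∀ i, T (e i) (e (finSucc i))) (x y : (i : Fin t) × Vt i)
    (h : Rel e a b σ x y) : CompArc T H x y := by
  obtain ⟨hp, -⟩ := h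
  left
  have hx : x.1 = e (pos e x) := (e.apply_symm_apply x.1).symm
  have hy : y.1 = e (finSucc (pos e x)) := by
    rw [← hp]; exact (e.apply_symm_apply y.1).symm
  rw [hx, hy]
  exact he _

end

end Stmt2Aux

theorem stmt_2 {t : ℕ} (ht : 2 ≤ t) (hte : Even t) {Vt : Fin t → Type*}
    [∀ i, Fintype (Vt i)]
    (T : Fin t → Fin t → Prop) (hT : Irreflexive T) (hTham : HasHamCycle T)
    (H : ∀ i, Vt i → Vt i → Prop) (hH : ∀ i, Irreflexive (H i))
    (hcard : ∀ i, 2 ≤ Fintype.card (Vt i)) :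
    GoodDecomp (CompArc T H) := by
  classical
  obtain ⟨e, he⟩ := hTham
  have hch : ∀ j : Fin t, ∃ p : Vt j × Vt j, p.1 ≠ p.2 := fun j => by
    obtain ⟨x, y, hxy⟩ := Fintype.exists_pair_of_one_lt_card (α := Vt j) (by have := hcard j; omega)
    exact ⟨(x, y), hxy⟩
  choose p hp using hch
  have h0 : 0 < t := by omega
  exact ⟨Stmt2Aux.Rel e (fun j => (p j).1) (fun j => (p j).2) false,
         Stmt2Aux.Rel e (fun j => (p j).1) (fun j => (p j).2) true,
         Stmt2Aux.relSub e _ _ false T H he,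
         Stmt2Aux.relSub e _ _ true T H he,
         Stmt2Aux.disjRel e _ _,
         Stmt2Aux.strongRel e _ _ hp hte false h0,
         Stmt2Aux.strongRel e _ _ hp hte true h0⟩
end

section
/- If T is a Hamiltonian digraph on an odd number t ≥ 3 of vertices, and H_1, ..., H_t are arbitrary digraphs with |V(H_1)| ≥ 2 and |V(H_i)| ≥ 3 for all i ≥ 2, then the composition Q = T[H_1, ..., H_t] has a pair of arc-disjoint strong spanning subdigraphs. -/
namespace GDaux

def capq (q : ℕ) : ℕ := if q = 0 then 1 else 2

def fC (t x : ℕ) : ℕ :=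
  if t = 3 then (if x = 2 then 0 else 1) else (if x = t % 3 then 1 else 0)

lemma fC_le (t x : ℕ) : fC t x ≤ 1 := by unfold fC; split_ifs <;> omega

lemma capq_le2 (q : ℕ) : capq q ≤ 2 := by unfold capq; split_ifs <;> omega

def PP (t : ℕ) (s : Bool) (l x y : ℕ) : Prop :=
  match s with
  | true =>
    if l = 0 then (x = 0 ∧ y = 2) ∨ (x = 1 ∧ y = 0) ∨ (x = 1 ∧ y = 1)
    else if l = 1 then y = x ∨ y = (x + 2) % 3
    else y = fC t x
  | false =>
    if l = 0 then (x = 0 ∧ y = 0) ∨ (x = 0 ∧ y = 1) ∨ (x = 1 ∧ y = 2)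
    else if l = 1 then y = (x + 1) % 3
    else y = 1 - fC t x

def ltypq (t q : ℕ) : ℕ := if q = 0 then 0 else if q = t - 1 then 2 else 1

lemma PP_disj (t l x y : ℕ) (hx : x ≤ 2) (h1 : PP t true l x y)
    (h2 : PP t false l x y) : False := by
  have hf := fC_le t x
  simp only [PP] at h1 h2
  split_ifs at h1 h2 <;> omega

lemma out_arith (t : ℕ) (ht3 : 3 ≤ t) (s : Bool) (q x : ℕ) (hq : q < t) (hx : x ≤ capq q) :
    ∃ y, y ≤ capq ((q + 1) % t) ∧ PP t s (ltypq t q) x y := by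
  by_cases hq0 : q = 0
  · subst hq0
    have h1 : (0 + 1) % t = 1 := Nat.mod_eq_of_lt (by omega)
    have hl : ltypq t 0 = 0 := by simp [ltypq]
    have hcap : capq ((0 + 1) % t) = 2 := by rw [h1]; simp [capq]
    have hx1 : x ≤ 1 := by simpa [capq] using hx
    rw [hl, hcap]
    cases s
    · interval_cases x
      · exact ⟨0, by omega, by simp [PP]⟩
      · exact ⟨2, by omega, by simp [PP]⟩
    · interval_cases x
      · exact ⟨2, by omega, by simp [PP]⟩
      · exact ⟨0, by omega, by simp [PP]⟩
  · by_cases hq1 : q = t - 1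
    · have hl : ltypq t q = 2 := by unfold ltypq; rw [if_neg hq0, if_pos hq1]
      have h0 : (q + 1) % t = 0 := by rw [show q + 1 = t by omega]; exact Nat.mod_self t
      have hcap : capq ((q + 1) % t) = 1 := by rw [h0]; simp [capq]
      rw [hl, hcap]
      cases s
      · exact ⟨1 - fC t x, by have := fC_le t x; omega, by simp [PP]⟩
      · exact ⟨fC t x, fC_le t x, by simp [PP]⟩
    · have hl : ltypq t q = 1 := by unfold ltypq; rw [if_neg hq0, if_neg hq1]
      have hcap : capq ((q + 1) % t) = 2 := by
        rw [Nat.mod_eq_of_lt (by omega)]; simp [capq]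
      rw [hl, hcap]
      cases s
      · exact ⟨(x + 1) % 3, by omega, by simp [PP]⟩
      · exact ⟨x, le_trans hx (capq_le2 q), by simp [PP]⟩

lemma fC_surj (t : ℕ) (ht3 : 3 ≤ t) (y : ℕ) (hy : y ≤ 1) : ∃ x, x ≤ 2 ∧ fC t x = y := by
  by_cases h3 : t = 3
  · subst h3
    interval_cases y
    · exact ⟨2, by omega, by simp [fC]⟩
    · exact ⟨0, by omega, by simp [fC]⟩
  · interval_cases y
    · exact ⟨(t % 3 + 1) % 3, by omega, by simp only [fC, if_neg h3]; split_ifs <;> omega⟩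
    · exact ⟨t % 3, by omega, by simp only [fC, if_neg h3]; split_ifs <;> omega⟩

lemma in_arith (t : ℕ) (ht3 : 3 ≤ t) (s : Bool) (q y : ℕ) (hq : q < t)
    (hy : y ≤ capq ((q + 1) % t)) :
    ∃ x, x ≤ capq q ∧ PP t s (ltypq t q) x y := by
  by_cases hq0 : q = 0
  · subst hq0
    have h1 : (0 + 1) % t = 1 := Nat.mod_eq_of_lt (by omega)
    have hl : ltypq t 0 = 0 := by simp [ltypq]
    have hy2 : y ≤ 2 := by rw [h1] at hy; simpa [capq] using hy
    have hcap : capq 0 = 1 := by simp [capq]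
    rw [hl, hcap]
    cases s
    · interval_cases y
      · exact ⟨0, by omega, by simp [PP]⟩
      · exact ⟨0, by omega, by simp [PP]⟩
      · exact ⟨1, by omega, by simp [PP]⟩
    · interval_cases y
      · exact ⟨1, by omega, by simp [PP]⟩
      · exact ⟨1, by omega, by simp [PP]⟩
      · exact ⟨0, by omega, by simp [PP]⟩
  · by_cases hq1 : q = t - 1
    · have hl : ltypq t q = 2 := by unfold ltypq; rw [if_neg hq0, if_pos hq1]
      have h0 : (q + 1) % t = 0 := by rw [show q + 1 = t by omega]; exact Nat.mod_self t
      have hy1 : y ≤ 1 := by rw [h0] at hy; simpa [capq] using hy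
      rw [hl]
      cases s
      · obtain ⟨x, hx2, hfx⟩ := fC_surj t ht3 (1 - y) (by omega)
        exact ⟨x, by unfold capq; rw [if_neg hq0]; omega, by simp [PP]; omega⟩
      · obtain ⟨x, hx2, hfx⟩ := fC_surj t ht3 y hy1
        exact ⟨x, by unfold capq; rw [if_neg hq0]; omega, by simp [PP, hfx]⟩
    · have hl : ltypq t q = 1 := by unfold ltypq; rw [if_neg hq0, if_neg hq1]
      have hy2 : y ≤ 2 := by
        rw [Nat.mod_eq_of_lt (by omega)] at hy
        exact le_trans hy (capq_le2 _)
      rw [hl]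
      cases s
      · exact ⟨(y + 2) % 3, by unfold capq; rw [if_neg hq0]; omega, by simp [PP]; omega⟩
      · exact ⟨y, by unfold capq; rw [if_neg hq0]; omega, by simp [PP]⟩


section Graph

variable {t : ℕ} {Vt : Fin t → Type*} [∀ i, Fintype (Vt i)]

noncomputable def idx (a : Σ i, Vt i) : ℕ := ((Fintype.equivFin (Vt a.1)) a.2).val

def pos (E : Fin t ≃ Fin t) (a : Σ i, Vt i) : Fin t := E.symm a.1

noncomputable def cls (E : Fin t ≃ Fin t) (a : Σ i, Vt i) : ℕ := min (idx a) (capq (pos E a).val)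

def Arc (E : Fin t ≃ Fin t) (s : Bool) (a b : Σ i, Vt i) : Prop :=
  pos E b = finSucc (pos E a) ∧ PP t s (ltypq t (pos E a).val) (cls E a) (cls E b)

noncomputable def rep (E : Fin t ≃ Fin t) (k : Fin t) (c : ℕ) (h : c < Fintype.card (Vt (E k))) :
    Σ i, Vt i := ⟨E k, (Fintype.equivFin (Vt (E k))).symm ⟨c, h⟩⟩

lemma pos_rep (E : Fin t ≃ Fin t) (k c h) : pos E (rep E k c h : Σ i, Vt i) = k := by
  simp [pos, rep]

lemma idx_rep (E : Fin t ≃ Fin t) (k c h) : idx (rep E k c h : Σ i, Vt i) = c := by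
  simp [idx, rep]
  exact congrArg Fin.val (Equiv.apply_symm_apply _ _)

lemma cls_rep (E : Fin t ≃ Fin t) (k : Fin t) (c : ℕ) (h) (hc : c ≤ capq k.val) :
    cls E (rep E k c h : Σ i, Vt i) = c := by
  unfold cls; rw [idx_rep, pos_rep]; exact min_eq_left hc

lemma cls_le_cap (E : Fin t ≃ Fin t) (a : Σ i, Vt i) : cls E a ≤ capq (pos E a).val :=
  min_le_right _ _

lemma cls_le2 (E : Fin t ≃ Fin t) (a : Σ i, Vt i) : cls E a ≤ 2 :=
  le_trans (cls_le_cap E a) (capq_le2 _)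

lemma crep (E : Fin t ≃ Fin t)
    (hC2 : ∀ k : Fin t, 2 ≤ Fintype.card (Vt (E k)))
    (hC3 : ∀ k : Fin t, k.val ≠ 0 → 3 ≤ Fintype.card (Vt (E k)))
    (k : Fin t) (c : ℕ) (hc : c ≤ capq k.val) : c < Fintype.card (Vt (E k)) := by
  by_cases h : k.val = 0
  · have := hC2 k; unfold capq at hc; rw [if_pos h] at hc; omega
  · have := hC3 k h; unfold capq at hc; rw [if_neg h] at hc; omega

lemma rep_congr (E : Fin t ≃ Fin t) (k k' : Fin t) (hkk : k = k') (c : ℕ) (hk) (hk') :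
    (rep E k c hk : Σ i, Vt i) = rep E k' c hk' := by subst hkk; rfl

lemma rep_eta (E : Fin t ≃ Fin t) (w : Σ i, Vt i)
    (hlow : idx w ≤ capq (pos E w).val) (h) :
    rep E (pos E w) (cls E w) h = w := by
  obtain ⟨i, x⟩ := w
  unfold rep cls pos idx at *
  revert h
  rw [E.apply_symm_apply]
  intro h
  have hmin : min ((Fintype.equivFin (Vt i)) x).val
      (capq ((E.symm i).val)) = ((Fintype.equivFin (Vt i)) x).val := min_eq_left hlow
  congr 1
  · rw [show (⟨min ((Fintype.equivFin (Vt i)) x).val (capq (E.symm i).val), h⟩ : Fin _)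
        = (Fintype.equivFin (Vt i)) x from Fin.ext hmin]
    rw [Equiv.symm_apply_apply]

lemma finSucc_val (k : Fin t) : (finSucc k).val = (k.val + 1) % t := rfl

lemma step_to (E : Fin t ≃ Fin t)
    (hC2 : ∀ k : Fin t, 2 ≤ Fintype.card (Vt (E k)))
    (hC3 : ∀ k : Fin t, k.val ≠ 0 → 3 ≤ Fintype.card (Vt (E k)))
    (s : Bool) (a : Σ i, Vt i) (y : ℕ)
    (hy : y ≤ capq (finSucc (pos E a)).val)
    (hP : PP t s (ltypq t (pos E a).val) (cls E a) y) :
    ∃ b, Arc E s a b ∧ pos E b = finSucc (pos E a) ∧ cls E b = y ∧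
      ∃ h, b = rep E (finSucc (pos E a)) y h := by
  have h := crep E hC2 hC3 (finSucc (pos E a)) y hy
  refine ⟨rep E _ y h, ⟨?_, ?_⟩, ?_, ?_, h, rfl⟩
  · rw [pos_rep]
  · rw [cls_rep E _ _ _ hy]; exact hP
  · rw [pos_rep]
  · exact cls_rep E _ _ _ hy


variable (E : Fin t ≃ Fin t)
variable (hC2 : ∀ k : Fin t, 2 ≤ Fintype.card (Vt (E k)))
variable (hC3 : ∀ k : Fin t, k.val ≠ 0 → 3 ≤ Fintype.card (Vt (E k)))
variable (ht3 : 3 ≤ t)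

include hC2 hC3 ht3

lemma fwd1 (s : Bool) (a : Σ i, Vt i) :
    ∃ b, Arc E s a b ∧ (pos E b).val = ((pos E a).val + 1) % t := by
  obtain ⟨y, hy, hP⟩ := out_arith t ht3 s (pos E a).val (cls E a) (pos E a).isLt
    (cls_le_cap E a)
  obtain ⟨b, hab, hpb, -, -⟩ := step_to E hC2 hC3 s a y hy hP
  exact ⟨b, hab, by rw [hpb, finSucc_val]⟩

lemma fwd (s : Bool) : ∀ (n : ℕ) (a : Σ i, Vt i),
    ∃ b, Relation.ReflTransGen (Arc E s) a b ∧ (pos E b).val = ((pos E a).val + n) % t := by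
  intro n
  induction n with
  | zero => exact fun a => ⟨a, .refl, (Nat.mod_eq_of_lt (pos E a).isLt).symm⟩
  | succ n ih =>
    intro a
    obtain ⟨b, hab, hpb⟩ := ih a
    obtain ⟨b', hbb, hpb'⟩ := fwd1 E hC2 hC3 ht3 s b
    refine ⟨b', hab.tail hbb, ?_⟩
    rw [hpb', hpb, Nat.mod_add_mod, ← Nat.add_assoc]

lemma back1 (s : Bool) (v : Σ i, Vt i) :
    ∃ (k : ℕ) (hk : k < t) (c : ℕ) (h : c < Fintype.card (Vt (E ⟨k, hk⟩))),
      Arc E s (rep E ⟨k, hk⟩ c h) v ∧ (k + 1) % t = (pos E v).val ∧ c ≤ capq k := by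
  set q := (pos E v).val with hq
  have hqt : q < t := (pos E v).isLt
  obtain ⟨k, hk, hsucc⟩ : ∃ (k : ℕ), k < t ∧ (k + 1) % t = q := by
    refine ⟨if q = 0 then t - 1 else q - 1, by split_ifs <;> omega, ?_⟩
    split_ifs with h0
    · rw [show t - 1 + 1 = t by omega, Nat.mod_self, h0]
    · rw [Nat.mod_eq_of_lt (by omega)]; omega
  have hy : cls E v ≤ capq ((k + 1) % t) := by rw [hsucc]; exact cls_le_cap E v
  obtain ⟨x, hx, hPP⟩ := in_arith t ht3 s k (cls E v) hk hy
  have h := crep E hC2 hC3 ⟨k, hk⟩ x hx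
  refine ⟨k, hk, x, h, ⟨?_, ?_⟩, hsucc, hx⟩
  · rw [pos_rep]
    exact Fin.ext (by rw [finSucc_val, hsucc])
  · rw [pos_rep, cls_rep E _ _ _ hx]
    exact hPP

lemma bwd (s : Bool) : ∀ (n : ℕ) (v : Σ i, Vt i),
    ∃ (k : ℕ) (hk : k < t) (c : ℕ) (h : c < Fintype.card (Vt (E ⟨k, hk⟩))),
      Relation.ReflTransGen (Arc E s) (rep E ⟨k, hk⟩ c h) v ∧
      (k + n + 1) % t = (pos E v).val ∧ c ≤ capq k := by
  intro n
  induction n with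
  | zero =>
    intro v
    obtain ⟨k, hk, c, h, harc, hsucc, hcap⟩ := back1 E hC2 hC3 ht3 s v
    exact ⟨k, hk, c, h, .single harc, by simpa using hsucc, hcap⟩
  | succ n ih =>
    intro v
    obtain ⟨k, hk, c, h, hwv, hinv, hcap⟩ := ih v
    obtain ⟨k', hk', c', h', harc, hsucc', hcap'⟩ :=
      back1 E hC2 hC3 ht3 s (rep E ⟨k, hk⟩ c h)
    rw [pos_rep] at hsucc'
    refine ⟨k', hk', c', h', Relation.ReflTransGen.head harc hwv, ?_, hcap'⟩
    calc (k' + (n + 1) + 1) % t = ((k' + 1) + (n + 1)) % t := by ring_nf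
      _ = (((k' + 1) % t) + (n + 1)) % t := by rw [Nat.mod_add_mod]
      _ = (k + n + 1) % t := by rw [hsucc', Fin.val_mk]; ring_nf
      _ = (pos E v).val := hinv


lemma stay1 : ∀ (m p : ℕ), 1 ≤ p → p + m ≤ t - 1 → ∀ a : Σ i, Vt i, (pos E a).val = p →
    ∃ b, Relation.ReflTransGen (Arc E true) a b ∧ (pos E b).val = p + m ∧
      cls E b = cls E a := by
  intro m
  induction m with
  | zero => intro p hp hpm a ha; exact ⟨a, .refl, by omega, rfl⟩
  | succ m ih =>
    intro p hp hpm a ha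
    obtain ⟨b, hab, hpb, hcb⟩ := ih p hp (by omega) a ha
    have hl : ltypq t (pos E b).val = 1 := by
      unfold ltypq; rw [hpb, if_neg (by omega), if_neg (by omega)]
    have hcap : capq (finSucc (pos E b)).val = 2 := by
      rw [finSucc_val, hpb, Nat.mod_eq_of_lt (by omega)]
      unfold capq; rw [if_neg (by omega)]
    obtain ⟨b', harc, hpb', hcb', -⟩ := step_to E hC2 hC3 true b (cls E b)
      (by rw [hcap]; exact cls_le2 E b)
      (by rw [hl]; simp [PP])
    refine ⟨b', hab.tail harc, ?_, by rw [hcb', hcb]⟩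
    rw [hpb', finSucc_val, hpb, Nat.mod_eq_of_lt (by omega)]
    omega

lemma decs1 : ∀ (j : ℕ), 1 + j ≤ t - 1 → ∀ a : Σ i, Vt i, (pos E a).val = 1 →
    ∃ b, Relation.ReflTransGen (Arc E true) a b ∧ (pos E b).val = 1 + j ∧
      cls E b = (cls E a + 2 * j) % 3 := by
  intro j
  induction j with
  | zero => intro hj a ha; exact ⟨a, .refl, by omega, by have := cls_le2 E a; omega⟩
  | succ j ih =>
    intro hj a ha
    obtain ⟨b, hab, hpb, hcb⟩ := ih (by omega) a ha
    have hl : ltypq t (pos E b).val = 1 := by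
      unfold ltypq; rw [hpb, if_neg (by omega), if_neg (by omega)]
    have hcap : capq (finSucc (pos E b)).val = 2 := by
      rw [finSucc_val, hpb, Nat.mod_eq_of_lt (by omega)]
      unfold capq; rw [if_neg (by omega)]
    obtain ⟨b', harc, hpb', hcb', -⟩ := step_to E hC2 hC3 true b ((cls E b + 2) % 3)
      (by rw [hcap]; omega)
      (by rw [hl]; simp [PP])
    refine ⟨b', hab.tail harc, ?_, ?_⟩
    · rw [hpb', finSucc_val, hpb, Nat.mod_eq_of_lt (by omega)]
      omega
    · rw [hcb', hcb]; omega

lemma incs2 : ∀ (m p : ℕ), 1 ≤ p → p + m ≤ t - 1 → ∀ a : Σ i, Vt i, (pos E a).val = p →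
    ∃ b, Relation.ReflTransGen (Arc E false) a b ∧ (pos E b).val = p + m ∧
      cls E b = (cls E a + m) % 3 := by
  intro m
  induction m with
  | zero => intro p hp hpm a ha; exact ⟨a, .refl, by omega, by have := cls_le2 E a; omega⟩
  | succ m ih =>
    intro p hp hpm a ha
    obtain ⟨b, hab, hpb, hcb⟩ := ih p hp (by omega) a ha
    have hl : ltypq t (pos E b).val = 1 := by
      unfold ltypq; rw [hpb, if_neg (by omega), if_neg (by omega)]
    have hcap : capq (finSucc (pos E b)).val = 2 := by
      rw [finSucc_val, hpb, Nat.mod_eq_of_lt (by omega)]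
      unfold capq; rw [if_neg (by omega)]
    obtain ⟨b', harc, hpb', hcb', -⟩ := step_to E hC2 hC3 false b ((cls E b + 1) % 3)
      (by rw [hcap]; omega)
      (by rw [hl]; simp [PP])
    refine ⟨b', hab.tail harc, ?_, ?_⟩
    · rw [hpb', finSucc_val, hpb, Nat.mod_eq_of_lt (by omega)]
      omega
    · rw [hcb', hcb]; omega

lemma lap1 (a : Σ i, Vt i) (ha : (pos E a).val = 1) (j : ℕ) (hj : 1 + j ≤ t - 1)
    (w : Σ i, Vt i) (hw : (pos E w).val = 1) (hlow : idx w ≤ capq (pos E w).val)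
    (hP : PP t true 0 (fC t ((cls E a + 2 * j) % 3)) (cls E w)) :
    Relation.ReflTransGen (Arc E true) a w := by
  obtain ⟨b1, h1, hp1, hc1⟩ := decs1 E hC2 hC3 ht3 j hj a ha
  obtain ⟨b2, h2, hp2, hc2⟩ := stay1 E hC2 hC3 ht3 (t - 1 - (1 + j)) (1 + j)
    (by omega) (by omega) b1 hp1
  have hp2' : (pos E b2).val = t - 1 := by omega
  have hl2 : ltypq t (pos E b2).val = 2 := by
    unfold ltypq; rw [hp2', if_neg (by omega), if_pos rfl]
  have hcap2 : capq (finSucc (pos E b2)).val = 1 := by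
    rw [finSucc_val, hp2', show t - 1 + 1 = t by omega, Nat.mod_self]
    unfold capq; rw [if_pos rfl]
  obtain ⟨b3, h3, hp3, hc3c, -⟩ := step_to E hC2 hC3 true b2 (fC t (cls E b2))
    (by rw [hcap2]; exact fC_le t _)
    (by rw [hl2]; simp [PP])
  have hp3' : (pos E b3).val = 0 := by
    rw [hp3, finSucc_val, hp2', show t - 1 + 1 = t by omega, Nat.mod_self]
  have hl3 : ltypq t (pos E b3).val = 0 := by unfold ltypq; rw [hp3', if_pos rfl]
  have hcap3 : capq (finSucc (pos E b3)).val = 2 := by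
    rw [finSucc_val, hp3', Nat.mod_eq_of_lt (by omega)]
    unfold capq; norm_num
  obtain ⟨b4, h4, hp4, hc4, hh, hrep4⟩ := step_to E hC2 hC3 true b3 (cls E w)
    (by rw [hcap3]; exact cls_le2 E w)
    (by rw [hl3, hc3c, hc2, hc1]; exact hP)
  have h' : cls E w < Fintype.card (Vt (E (pos E w))) :=
    crep E hC2 hC3 (pos E w) (cls E w) (cls_le_cap E w)
  have hbw : b4 = w := by
    rw [hrep4]
    have hKeq : finSucc (pos E b3) = pos E w :=
      Fin.ext (by rw [finSucc_val, hp3', hw]; exact Nat.mod_eq_of_lt (by omega))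
    rw [rep_congr E _ _ hKeq (cls E w) hh h']
    exact rep_eta E w hlow h'
  rw [← hbw]
  exact h1.trans (h2.trans ((Relation.ReflTransGen.single h3).trans (.single h4)))

lemma lap2 (a : Σ i, Vt i) (ha : (pos E a).val = 1)
    (w : Σ i, Vt i) (hw : (pos E w).val = 1) (hlow : idx w ≤ capq (pos E w).val)
    (hP : PP t false 0 (1 - fC t ((cls E a + (t - 2)) % 3)) (cls E w)) :
    Relation.ReflTransGen (Arc E false) a w := by
  obtain ⟨b2, h2, hp2, hc2⟩ := incs2 E hC2 hC3 ht3 (t - 2) 1 (by omega) (by omega) a ha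
  have hp2' : (pos E b2).val = t - 1 := by omega
  have hl2 : ltypq t (pos E b2).val = 2 := by
    unfold ltypq; rw [hp2', if_neg (by omega), if_pos rfl]
  have hcap2 : capq (finSucc (pos E b2)).val = 1 := by
    rw [finSucc_val, hp2', show t - 1 + 1 = t by omega, Nat.mod_self]
    unfold capq; rw [if_pos rfl]
  obtain ⟨b3, h3, hp3, hc3c, -⟩ := step_to E hC2 hC3 false b2 (1 - fC t (cls E b2))
    (by rw [hcap2]; have := fC_le t (cls E b2); omega)
    (by rw [hl2]; simp [PP])
  have hp3' : (pos E b3).val = 0 := by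
    rw [hp3, finSucc_val, hp2', show t - 1 + 1 = t by omega, Nat.mod_self]
  have hl3 : ltypq t (pos E b3).val = 0 := by unfold ltypq; rw [hp3', if_pos rfl]
  have hcap3 : capq (finSucc (pos E b3)).val = 2 := by
    rw [finSucc_val, hp3', Nat.mod_eq_of_lt (by omega)]
    unfold capq; norm_num
  obtain ⟨b4, h4, hp4, hc4, hh, hrep4⟩ := step_to E hC2 hC3 false b3 (cls E w)
    (by rw [hcap3]; exact cls_le2 E w)
    (by rw [hl3, hc3c, hc2]; exact hP)
  have h' : cls E w < Fintype.card (Vt (E (pos E w))) :=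
    crep E hC2 hC3 (pos E w) (cls E w) (cls_le_cap E w)
  have hbw : b4 = w := by
    rw [hrep4]
    have hKeq : finSucc (pos E b3) = pos E w :=
      Fin.ext (by rw [finSucc_val, hp3', hw]; exact Nat.mod_eq_of_lt (by omega))
    rw [rep_congr E _ _ hKeq (cls E w) hh h']
    exact rep_eta E w hlow h'
  rw [← hbw]
  exact h2.trans ((Relation.ReflTransGen.single h3).trans (.single h4))


lemma mix2 (a : Σ i, Vt i) (ha : (pos E a).val = 1)
    (w : Σ i, Vt i) (hw : (pos E w).val = 1) (hlow : idx w ≤ capq (pos E w).val) :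
    Relation.ReflTransGen (Arc E false) a w := by
  have hcw : cls E w ≤ 2 := cls_le2 E w
  have h1t : (1 : ℕ) < t := by omega
  have hD1 : fC t ((1 + (t - 2)) % 3) = 0 := by simp only [fC]; split_ifs <;> omega
  have hD2 : fC t ((2 + (t - 2)) % 3) = 1 := by simp only [fC]; split_ifs <;> omega
  have hcap1 : capq ((⟨1, h1t⟩ : Fin t)).val = 2 := by unfold capq; norm_num
  by_cases hD : fC t ((cls E a + (t - 2)) % 3) = 1
  · by_cases hw2 : cls E w = 2
    · -- two laps via class-1 vertex
      have hu : (1:ℕ) < Fintype.card (Vt (E ⟨1, h1t⟩)) :=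
        crep E hC2 hC3 ⟨1, h1t⟩ 1 (by omega)
      set u1 := rep E ⟨1, h1t⟩ 1 hu with hu1def
      have hpu1 : (pos E u1).val = 1 := by rw [hu1def, pos_rep]
      have hcu1 : cls E u1 = 1 := by rw [hu1def, cls_rep E _ _ _ (by omega)]
      have hlu1 : idx u1 ≤ capq (pos E u1).val := by
        rw [hu1def, idx_rep, pos_rep]; omega
      have l1 : Relation.ReflTransGen (Arc E false) a u1 :=
        lap2 E hC2 hC3 ht3 a ha u1 hpu1 hlu1 (by rw [hD, hcu1]; simp [PP])
      have l2 : Relation.ReflTransGen (Arc E false) u1 w :=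
        lap2 E hC2 hC3 ht3 u1 hpu1 w hw hlow (by rw [hcu1, hD1]; simp [PP, hw2])
      exact l1.trans l2
    · exact lap2 E hC2 hC3 ht3 a ha w hw hlow (by rw [hD]; simp [PP]; omega)
  · have hD0 : fC t ((cls E a + (t - 2)) % 3) = 0 := by have := fC_le t ((cls E a + (t - 2)) % 3); omega
    by_cases hw2 : cls E w = 2
    · exact lap2 E hC2 hC3 ht3 a ha w hw hlow (by rw [hD0]; simp [PP, hw2])
    · have hu : (2:ℕ) < Fintype.card (Vt (E ⟨1, h1t⟩)) :=
        crep E hC2 hC3 ⟨1, h1t⟩ 2 (by omega)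
      set u2 := rep E ⟨1, h1t⟩ 2 hu with hu2def
      have hpu2 : (pos E u2).val = 1 := by rw [hu2def, pos_rep]
      have hcu2 : cls E u2 = 2 := by rw [hu2def, cls_rep E _ _ _ (by omega)]
      have hlu2 : idx u2 ≤ capq (pos E u2).val := by
        rw [hu2def, idx_rep, pos_rep]; omega
      have l1 : Relation.ReflTransGen (Arc E false) a u2 :=
        lap2 E hC2 hC3 ht3 a ha u2 hpu2 hlu2 (by rw [hD0, hcu2]; simp [PP])
      have l2 : Relation.ReflTransGen (Arc E false) u2 w :=
        lap2 E hC2 hC3 ht3 u2 hpu2 w hw hlow (by rw [hcu2, hD2]; simp [PP]; omega)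
      exact l1.trans l2

lemma mix1 (h35 : t = 3 ∨ 5 ≤ t) (a : Σ i, Vt i) (ha : (pos E a).val = 1)
    (w : Σ i, Vt i) (hw : (pos E w).val = 1) (hlow : idx w ≤ capq (pos E w).val) :
    Relation.ReflTransGen (Arc E true) a w := by
  have hca : cls E a ≤ 2 := cls_le2 E a
  have hcw : cls E w ≤ 2 := cls_le2 E w
  have h1t : (1 : ℕ) < t := by omega
  by_cases hw2 : cls E w = 2
  · rcases h35 with h3 | h5
    · subst h3
      by_cases hc1 : cls E a = 1
      · -- two laps via class-0 vertex
        have hu : (0:ℕ) < Fintype.card (Vt (E ⟨1, h1t⟩)) :=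
          crep E hC2 hC3 ⟨1, h1t⟩ 0 (by unfold capq; norm_num)
        set u0 := rep E ⟨1, h1t⟩ 0 hu with hu0def
        have hpu0 : (pos E u0).val = 1 := by rw [hu0def, pos_rep]
        have hcu0 : cls E u0 = 0 := by
          rw [hu0def, cls_rep E _ _ _ (by unfold capq; norm_num)]
        have hlu0 : idx u0 ≤ capq (pos E u0).val := by
          rw [hu0def, idx_rep, pos_rep]; omega
        have hf1 : fC 3 ((cls E a + 2 * 0) % 3) = 1 := by
          rw [hc1]; simp [fC]
        have l1 : Relation.ReflTransGen (Arc E true) a u0 :=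
          lap1 E hC2 hC3 ht3 a ha 0 (by omega) u0 hpu0 hlu0 (by rw [hf1, hcu0]; simp [PP])
        have hf2 : fC 3 ((cls E u0 + 2 * 1) % 3) = 0 := by rw [hcu0]; simp [fC]
        have l2 : Relation.ReflTransGen (Arc E true) u0 w :=
          lap1 E hC2 hC3 ht3 u0 hpu0 1 (by omega) w hw hlow (by rw [hf2]; simp [PP, hw2])
        exact l1.trans l2
      · refine lap1 E hC2 hC3 ht3 a ha (if cls E a = 2 then 0 else 1)
          (by split_ifs <;> omega) w hw hlow ?_
        have hfx : fC 3 ((cls E a + 2 * (if cls E a = 2 then 0 else 1)) % 3) = 0 := by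
          simp only [fC]; split_ifs <;> omega
        rw [hfx]; simp [PP, hw2]
    · refine lap1 E hC2 hC3 ht3 a ha (if cls E a = t % 3 then 1 else 0)
        (by split_ifs <;> omega) w hw hlow ?_
      have hfx : fC t ((cls E a + 2 * (if cls E a = t % 3 then 1 else 0)) % 3) = 0 := by
        simp only [fC]; split_ifs <;> omega
      rw [hfx]; simp [PP, hw2]
  · rcases h35 with h3 | h5
    · subst h3
      refine lap1 E hC2 hC3 ht3 a ha (if cls E a = 2 then 1 else 0)
        (by split_ifs <;> omega) w hw hlow ?_
      have hfx : fC 3 ((cls E a + 2 * (if cls E a = 2 then 1 else 0)) % 3) = 1 := by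
        simp only [fC]; split_ifs <;> omega
      rw [hfx]; simp [PP]; omega
    · refine lap1 E hC2 hC3 ht3 a ha ((2 * (t % 3) + cls E a) % 3)
        (by omega) w hw hlow ?_
      have hfx : fC t ((cls E a + 2 * ((2 * (t % 3) + cls E a) % 3)) % 3) = 1 := by
        simp only [fC]; split_ifs <;> omega
      rw [hfx]; simp [PP]; omega

lemma strongArc (h35 : t = 3 ∨ 5 ≤ t) (s : Bool) : ∀ u v : Σ i, Vt i,
    Relation.ReflTransGen (Arc E s) u v := by
  intro u v
  obtain ⟨b, hub, hpb⟩ := fwd E hC2 hC3 ht3 s (t + 1 - (pos E u).val) u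
  have hb1 : (pos E b).val = 1 := by
    rw [hpb, show (pos E u).val + (t + 1 - (pos E u).val) = 1 + t by
      have := (pos E u).isLt; omega]
    rw [Nat.add_mod_right]
    exact Nat.mod_eq_of_lt (by omega)
  obtain ⟨k, hk, c, h, hwv, hinv, hcap⟩ := bwd E hC2 hC3 ht3 s ((pos E v).val + t - 2) v
  have hk1 : k = 1 := by
    have hq := (pos E v).isLt
    rw [show k + ((pos E v).val + t - 2) + 1 = k + (pos E v).val + t - 1 by omega] at hinv
    have hd := Nat.div_add_mod (k + (pos E v).val + t - 1) t
    rw [hinv] at hd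
    set D := (k + (pos E v).val + t - 1) / t with hD
    have hD2 : D < 2 := by
      by_contra hh
      push_neg at hh
      have : t * 2 ≤ t * D := Nat.mul_le_mul_left t hh
      omega
    interval_cases D <;> omega
  subst hk1
  have hwrep : (pos E (rep E ⟨1, hk⟩ c h)).val = 1 := by rw [pos_rep]
  have hlow : idx (rep E ⟨1, hk⟩ c h) ≤ capq (pos E (rep E ⟨1, hk⟩ c h)).val := by
    rw [idx_rep, pos_rep]; exact hcap
  cases s
  · exact hub.trans ((mix2 E hC2 hC3 ht3 b hb1 _ hwrep hlow).trans hwv)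
  · exact hub.trans ((mix1 E hC2 hC3 ht3 h35 b hb1 _ hwrep hlow).trans hwv)

end Graph

end GDaux


theorem stmt_3 {t : ℕ} (ht : 3 ≤ t) (hto : Odd t) {Vt : Fin t → Type*}
    [∀ i, Fintype (Vt i)]
    (T : Fin t → Fin t → Prop) (hT : Irreflexive T) (hTham : HasHamCycle T)
    (H : ∀ i, Vt i → Vt i → Prop) (hH : ∀ i, Irreflexive (H i))
    (hcard1 : 2 ≤ Fintype.card (Vt ⟨0, by omega⟩))
    (hcard : ∀ i : Fin t, i ≠ ⟨0, by omega⟩ → 3 ≤ Fintype.card (Vt i)) :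
    GoodDecomp (CompArc T H) := by
  classical
  obtain ⟨e, he⟩ := hTham
  haveI : NeZero t := ⟨by omega⟩
  set p₀ := e.symm ⟨0, by omega⟩ with hp₀
  set E : Fin t ≃ Fin t := (Equiv.addRight p₀).trans e with hEdef
  have hEapp : ∀ k : Fin t, E k = e (k + p₀) := fun k => rfl
  have hfs : ∀ k : Fin t, finSucc (k + p₀) = finSucc k + p₀ := by
    intro k
    apply Fin.ext
    rw [GDaux.finSucc_val, Fin.val_add, Fin.val_add, GDaux.finSucc_val,
      Nat.mod_add_mod, Nat.mod_add_mod]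
    ring_nf
  have hE' : ∀ k : Fin t, T (E k) (E (finSucc k)) := by
    intro k
    have h1 := he (k + p₀)
    rw [hEapp, hEapp, ← hfs]
    exact h1
  have hzero : E ⟨0, by omega⟩ = ⟨0, by omega⟩ := by
    rw [hEapp]
    have hadd : (⟨0, by omega⟩ : Fin t) + p₀ = p₀ := by
      apply Fin.ext
      rw [Fin.val_add]
      simp [Nat.mod_eq_of_lt p₀.isLt]
    rw [hadd, hp₀, Equiv.apply_symm_apply]
  have hC2 : ∀ k : Fin t, 2 ≤ Fintype.card (Vt (E k)) := by
    intro k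
    by_cases hk : k.val = 0
    · have hkk : k = ⟨0, by omega⟩ := Fin.ext hk
      rw [hkk, hzero]; exact hcard1
    · have hne : E k ≠ ⟨0, by omega⟩ := by
        intro hEk
        have : k = ⟨0, by omega⟩ := E.injective (hEk.trans hzero.symm)
        exact hk (by rw [this])
      have := hcard (E k) hne; omega
  have hC3 : ∀ k : Fin t, k.val ≠ 0 → 3 ≤ Fintype.card (Vt (E k)) := by
    intro k hk
    have hne : E k ≠ ⟨0, by omega⟩ := by
      intro hEk
      have : k = ⟨0, by omega⟩ := E.injective (hEk.trans hzero.symm)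
      exact hk (by rw [this])
    exact hcard (E k) hne
  have ht3 : 3 ≤ t := ht
  have h35 : t = 3 ∨ 5 ≤ t := by obtain ⟨r, hr⟩ := hto; omega
  refine ⟨GDaux.Arc E true, GDaux.Arc E false, ?_, ?_, ?_, ?_, ?_⟩
  · rintro x y ⟨hp, -⟩
    left
    have h1 : x.1 = E (GDaux.pos E x) := (E.apply_symm_apply x.1).symm
    have h2 : y.1 = E (finSucc (GDaux.pos E x)) := by
      rw [← hp]; exact (E.apply_symm_apply y.1).symm
    rw [h1, h2]; exact hE' _
  · rintro x y ⟨hp, -⟩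
    left
    have h1 : x.1 = E (GDaux.pos E x) := (E.apply_symm_apply x.1).symm
    have h2 : y.1 = E (finSucc (GDaux.pos E x)) := by
      rw [← hp]; exact (E.apply_symm_apply y.1).symm
    rw [h1, h2]; exact hE' _
  · rintro x y ⟨⟨hp1, hP1⟩, ⟨hp2, hP2⟩⟩
    exact GDaux.PP_disj t _ _ _ (GDaux.cls_le2 E x) hP1 hP2
  · exact GDaux.strongArc E hC2 hC3 ht3 h35 true
  · exact GDaux.strongArc E hC2 hC3 ht3 h35 false
end

section
/- If T is a Hamiltonian digraph on an odd number t ≥ 3 of vertices, each H_i has at least 2 vertices, and at least two distinct digraphs among H_1, ..., H_t contain at least one arc, then the composition Q = T[H_1, ..., H_t] has a pair of arc-disjoint strong spanning subdigraphs. -/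
open Fin.NatCast Fin.CommRing

section GD
open Relation
variable {t : ℕ} {W : Type*}

open Relation

variable {t : ℕ} {W : Type*}

def GDEx (blkOf : W → Fin t) (A B : Fin t → W) (j : Fin t) (x : W) : Prop :=
  blkOf x = j ∧ x ≠ A j ∧ x ≠ B j

def GDR1 [NeZero t] (blkOf : W → Fin t) (A B : Fin t → W) (r : Fin t) : W → W → Prop :=
  fun x y =>
    (∃ j, j ≠ r ∧ ((x = A j ∧ y = A (j+1)) ∨ (x = B j ∧ y = B (j+1))))
    ∨ (x = A r ∧ y = B (r+1)) ∨ (x = B r ∧ y = A (r+1))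
    ∨ (∃ j, x = B j ∧ GDEx blkOf A B (j+1) y)
    ∨ (∃ j, GDEx blkOf A B j x ∧ y = A (j+1))

def GDR2 [NeZero t] (blkOf : W → Fin t) (A B : Fin t → W) (r m : Fin t) : W → W → Prop :=
  fun x y =>
    (∃ j, j ≠ r ∧ ((x = A j ∧ y = B (j+1)) ∨ (x = B j ∧ y = A (j+1))))
    ∨ (x = A r ∧ y = A (r+1)) ∨ (x = B r ∧ y = B (r+1))
    ∨ (∃ j, x = A j ∧ GDEx blkOf A B (j+1) y)
    ∨ (∃ j, GDEx blkOf A B j x ∧ y = B (j+1))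
    ∨ (x = A 0 ∧ y = B 0) ∨ (x = A m ∧ y = B m)

def GDflips (t rv s : ℕ) : ℕ := s / t + (if rv < s % t then 1 else 0)

def GDsv (A B : Fin t → W) (b : Bool) (j : Fin t) : W := bif b then A j else B j

@[simp] lemma GDsv_true (A B : Fin t → W) (j : Fin t) : GDsv A B true j = A j := rfl
@[simp] lemma GDsv_false (A B : Fin t → W) (j : Fin t) : GDsv A B false j = B j := rfl

def GDc1 [NeZero t] (A B : Fin t → W) (rv : ℕ) (s : ℕ) : W :=
  GDsv A B (decide (GDflips t rv s % 2 = 0)) (s : Fin t)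

def GDd1 [NeZero t] (A B : Fin t → W) (rv : ℕ) (b : Bool) (s : ℕ) : W :=
  GDsv A B (xor b (decide ((s + GDflips t rv s) % 2 = 1))) (s : Fin t)

lemma GD_succ_div_mod (t s : ℕ) (ht : 0 < t) :
    ((s+1) / t = s / t ∧ (s+1) % t = s % t + 1 ∧ s % t + 1 < t)
    ∨ ((s+1) / t = s / t + 1 ∧ (s+1) % t = 0 ∧ s % t + 1 = t) := by
  have hdm := Nat.div_add_mod s t
  have hlt : s % t < t := Nat.mod_lt _ ht
  rcases Nat.lt_or_ge (s % t + 1) t with h | h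
  · left
    have := (Nat.div_mod_unique ht (a := s+1) (d := s / t) (c := s % t + 1)).mpr
      ⟨by omega, h⟩
    exact ⟨this.1, this.2, h⟩
  · right
    have ht' : s % t + 1 = t := by omega
    have hmul : t * (s / t + 1) = t * (s / t) + t := by ring
    have := (Nat.div_mod_unique ht (a := s+1) (d := s / t + 1) (c := 0)).mpr
      ⟨by omega, ht⟩
    exact ⟨this.1, this.2, ht'⟩

lemma GDflips_succ (t rv s : ℕ) (ht : 0 < t) (hrv : rv < t) :
    GDflips t rv (s+1) = GDflips t rv s + (if s % t = rv then 1 else 0) := by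
  unfold GDflips
  rcases GD_succ_div_mod t s ht with ⟨h1, h2, h3⟩ | ⟨h1, h2, h3⟩ <;>
    rw [h1, h2] <;> split_ifs <;> omega

lemma GDflips_add_t (t rv s : ℕ) (ht : 0 < t) :
    GDflips t rv (s + t) = GDflips t rv s + 1 := by
  unfold GDflips
  rw [Nat.add_div_right _ ht, Nat.add_mod_right]
  omega

lemma GD_chain (R : W → W → Prop) (f : ℕ → W) (hf : ∀ s, R (f s) (f (s+1))) (s k : ℕ) :
    ReflTransGen R (f s) (f (s + k)) := by
  induction k with
  | zero => exact .refl
  | succ k ih => exact ih.tail (hf (s+k))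

lemma GD_cyc_reach (R : W → W → Prop) (f : ℕ → W) (p : ℕ) (hp : 0 < p)
    (hf : ∀ s, R (f s) (f (s+1))) (hper : ∀ s, f (s + p) = f s) (s s' : ℕ) :
    ReflTransGen R (f s) (f s') := by
  have hiter : ∀ (n : ℕ) (s0 : ℕ), f (s0 + p * n) = f s0 := by
    intro n
    induction n with
    | zero => simp
    | succ n ih =>
        intro s0
        have : s0 + p * (n+1) = (s0 + p * n) + p := by ring
        rw [this, hper, ih]
  have hge : s ≤ s' + p * (s+1) := by
    have := Nat.le_mul_of_pos_left (s+1) hp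
    omega
  obtain ⟨k, hk⟩ := Nat.le.dest hge
  have h := GD_chain R f hf s k
  rw [hk, hiter (s+1) s'] at h
  exact h

lemma GDc1_step [NeZero t] (blkOf : W → Fin t) (A B : Fin t → W) (r : Fin t) (s : ℕ) :
    GDR1 blkOf A B r (GDc1 A B r.val s) (GDc1 A B r.val (s+1)) := by
  have ht : 0 < t := Fin.pos r
  have hcast : ((s+1 : ℕ) : Fin t) = (s : Fin t) + 1 := by push_cast; ring
  have hf := GDflips_succ t r.val s ht r.isLt
  by_cases h : s % t = r.val
  · have hsr : (s : Fin t) = r := by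
      apply Fin.ext; rw [Fin.val_natCast]; exact h
    rw [if_pos h] at hf
    by_cases hp : GDflips t r.val s % 2 = 0
    · have hd1 : decide (GDflips t r.val s % 2 = 0) = true := decide_eq_true hp
      have hd2 : decide (GDflips t r.val (s+1) % 2 = 0) = false :=
        decide_eq_false (by omega)
      unfold GDc1
      rw [hd1, hd2, hcast, hsr, GDsv_true, GDsv_false]
      exact Or.inr (Or.inl ⟨rfl, rfl⟩)
    · have hd1 : decide (GDflips t r.val s % 2 = 0) = false := decide_eq_false hp
      have hd2 : decide (GDflips t r.val (s+1) % 2 = 0) = true :=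
        decide_eq_true (by omega)
      unfold GDc1
      rw [hd1, hd2, hcast, hsr, GDsv_true, GDsv_false]
      exact Or.inr (Or.inr (Or.inl ⟨rfl, rfl⟩))
  · have hsr : (s : Fin t) ≠ r := by
      intro hh; apply h; rw [← hh, Fin.val_natCast]
    rw [if_neg h] at hf
    simp only [Nat.add_zero] at hf
    unfold GDc1
    rw [hf, hcast]
    cases hd : decide (GDflips t r.val s % 2 = 0) with
    | true => exact Or.inl ⟨(s : Fin t), hsr, Or.inl ⟨rfl, rfl⟩⟩
    | false => exact Or.inl ⟨(s : Fin t), hsr, Or.inr ⟨rfl, rfl⟩⟩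

lemma GDd1_step [NeZero t] (blkOf : W → Fin t) (A B : Fin t → W) (r m : Fin t)
    (b : Bool) (s : ℕ) :
    GDR2 blkOf A B r m (GDd1 A B r.val b s) (GDd1 A B r.val b (s+1)) := by
  have ht : 0 < t := Fin.pos r
  have hcast : ((s+1 : ℕ) : Fin t) = (s : Fin t) + 1 := by push_cast; ring
  have hf := GDflips_succ t r.val s ht r.isLt
  by_cases h : s % t = r.val
  · have hsr : (s : Fin t) = r := by
      apply Fin.ext; rw [Fin.val_natCast]; exact h
    rw [if_pos h] at hf
    have hpar : ((s+1) + GDflips t r.val (s+1)) % 2 = (s + GDflips t r.val s) % 2 := by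
      omega
    unfold GDd1
    rw [hpar, hcast, hsr]
    cases hb : xor b (decide ((s + GDflips t r.val s) % 2 = 1)) with
    | true =>
        rw [GDsv_true]
        exact Or.inr (Or.inl ⟨rfl, rfl⟩)
    | false =>
        rw [GDsv_false]
        exact Or.inr (Or.inr (Or.inl ⟨rfl, rfl⟩))
  · have hsr : (s : Fin t) ≠ r := by
      intro hh; apply h; rw [← hh, Fin.val_natCast]
    rw [if_neg h] at hf
    simp only [Nat.add_zero] at hf
    unfold GDd1
    rw [hf, hcast]
    by_cases hp : (s + GDflips t r.val s) % 2 = 1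
    · have hd1 : decide ((s + GDflips t r.val s) % 2 = 1) = true := decide_eq_true hp
      have hd2 : decide (((s+1) + GDflips t r.val s) % 2 = 1) = false :=
        decide_eq_false (by omega)
      rw [hd1, hd2, Bool.xor_true, Bool.xor_false]
      cases b with
      | true =>
          rw [Bool.not_true, GDsv_false, GDsv_true]
          exact Or.inl ⟨(s : Fin t), hsr, Or.inr ⟨rfl, rfl⟩⟩
      | false =>
          rw [Bool.not_false, GDsv_true, GDsv_false]
          exact Or.inl ⟨(s : Fin t), hsr, Or.inl ⟨rfl, rfl⟩⟩
    · have hd1 : decide ((s + GDflips t r.val s) % 2 = 1) = false := decide_eq_false hp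
      have hd2 : decide (((s+1) + GDflips t r.val s) % 2 = 1) = true :=
        decide_eq_true (by omega)
      rw [hd1, hd2, Bool.xor_true, Bool.xor_false]
      cases b with
      | true =>
          rw [Bool.not_true, GDsv_true, GDsv_false]
          exact Or.inl ⟨(s : Fin t), hsr, Or.inl ⟨rfl, rfl⟩⟩
      | false =>
          rw [Bool.not_false, GDsv_false, GDsv_true]
          exact Or.inl ⟨(s : Fin t), hsr, Or.inr ⟨rfl, rfl⟩⟩

end GD

open Relation in
theorem GD_core {t : ℕ} [NeZero t] {W : Type*} (ht : 3 ≤ t) (hto : Odd t)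
    (Arc : W → W → Prop) (blkOf : W → Fin t) (A B : Fin t → W)
    (hA : ∀ j, blkOf (A j) = j) (hB : ∀ j, blkOf (B j) = j)
    (hABne : ∀ j, A j ≠ B j)
    (hbetween : ∀ x y : W, blkOf y = blkOf x + 1 → Arc x y)
    (m : Fin t) (hm : m ≠ 0)
    (harc0 : Arc (A 0) (B 0)) (harcm : Arc (A m) (B m)) :
    GoodDecomp Arc := by
  classical
  -- basic helpers
  have hone : ¬ ((1 : Fin t) = 0) := by
    intro h
    have h2 := congrArg Fin.val h
    rw [Fin.val_one', Fin.val_zero, Nat.mod_eq_of_lt (by omega)] at h2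
    omega
  have hsucc_ne : ∀ j : Fin t, ¬ (j + 1 = j) := by
    intro j h
    exact hone (add_eq_left.mp h)
  have hAeq : ∀ j k : Fin t, A j = A k ↔ j = k := by
    intro j k
    constructor
    · intro h; have h2 := congrArg blkOf h; rwa [hA, hA] at h2
    · intro h; rw [h]
  have hBeq : ∀ j k : Fin t, B j = B k ↔ j = k := by
    intro j k
    constructor
    · intro h; have h2 := congrArg blkOf h; rwa [hB, hB] at h2
    · intro h; rw [h]
  have hABk : ∀ j k : Fin t, ¬ (A j = B k) := by
    intro j k h
    have hjk : j = k := by have h2 := congrArg blkOf h; rwa [hA, hB] at h2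
    exact hABne k (hjk ▸ h)
  have hBAk : ∀ j k : Fin t, ¬ (B j = A k) := fun j k h => hABk k j h.symm
  have hExA : ∀ j k : Fin t, ¬ GDEx blkOf A B j (A k) := by
    rintro j k ⟨h1, h2, h3⟩
    rw [hA] at h1
    exact h2 (by rw [h1])
  have hExB : ∀ j k : Fin t, ¬ GDEx blkOf A B j (B k) := by
    rintro j k ⟨h1, h2, h3⟩
    rw [hB] at h1
    exact h3 (by rw [h1])
  have tricho : ∀ x : W, x = A (blkOf x) ∨ x = B (blkOf x) ∨ GDEx blkOf A B (blkOf x) x := by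
    intro x
    by_cases h1 : x = A (blkOf x)
    · exact Or.inl h1
    by_cases h2 : x = B (blkOf x)
    · exact Or.inr (Or.inl h2)
    exact Or.inr (Or.inr ⟨rfl, h1, h2⟩)
  set r : Fin t := if m.val % 2 = 0 then 0 else m with hr
  refine ⟨GDR1 blkOf A B r, GDR2 blkOf A B r m, ?_, ?_, ?_, ?_, ?_⟩
  · -- R1 ⊆ Arc
    rintro x y (⟨j, hj, (⟨rfl, rfl⟩ | ⟨rfl, rfl⟩)⟩ | ⟨rfl, rfl⟩ | ⟨rfl, rfl⟩ |
      ⟨j, rfl, hEx⟩ | ⟨j, hEx, rfl⟩)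
    · apply hbetween; simp [hA]
    · apply hbetween; simp [hB]
    · apply hbetween; simp [hA, hB]
    · apply hbetween; simp [hA, hB]
    · apply hbetween; simp [hB, hEx.1]
    · apply hbetween; simp [hA, hEx.1]
  · -- R2 ⊆ Arc
    rintro x y (⟨j, hj, (⟨rfl, rfl⟩ | ⟨rfl, rfl⟩)⟩ | ⟨rfl, rfl⟩ | ⟨rfl, rfl⟩ |
      ⟨j, rfl, hEx⟩ | ⟨j, hEx, rfl⟩ | ⟨rfl, rfl⟩ | ⟨rfl, rfl⟩)
    · apply hbetween; simp [hA, hB]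
    · apply hbetween; simp [hA, hB]
    · apply hbetween; simp [hA]
    · apply hbetween; simp [hB]
    · apply hbetween; simp [hA, hEx.1]
    · apply hbetween; simp [hB, hEx.1]
    · exact harc0
    · exact harcm
  · -- disjoint
    rintro x y ⟨h1, h2⟩
    obtain (⟨j, hj, (⟨rfl, rfl⟩ | ⟨rfl, rfl⟩)⟩ | ⟨rfl, rfl⟩ | ⟨rfl, rfl⟩ |
      ⟨j, rfl, hEx⟩ | ⟨j, hEx, rfl⟩) := h1 <;>
    obtain (⟨k, hk, (⟨hx, hy⟩ | ⟨hx, hy⟩)⟩ | ⟨hx, hy⟩ | ⟨hx, hy⟩ |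
      ⟨k, hx, hEx2⟩ | ⟨k, hEx2, hy⟩ | ⟨hx, hy⟩ | ⟨hx, hy⟩) := h2 <;>
    simp_all [hAeq, hBeq, hABk, hBAk, hExA, hExB, hsucc_ne, hone]
  · -- R1 strong
    have hstep1 : ∀ s, GDR1 blkOf A B r (GDc1 A B r.val s) (GDc1 A B r.val (s+1)) :=
      fun s => GDc1_step blkOf A B r s
    have hper1 : ∀ s, GDc1 A B r.val (s + 2*t) = GDc1 A B r.val s := by
      intro s
      have e1 := GDflips_add_t t r.val s (by omega)
      have e2 := GDflips_add_t t r.val (s+t) (by omega)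
      have h1 : GDflips t r.val (s + 2*t) = GDflips t r.val s + 2 := by
        have h3 : s + 2*t = s + t + t := by ring
        rw [h3, e2, e1]
      have h2 : ((s + 2*t : ℕ) : Fin t) = (s : Fin t) := by
        apply Fin.ext
        rw [Fin.val_natCast, Fin.val_natCast, Nat.add_mul_mod_self_right]
      unfold GDc1
      rw [h1, h2, Nat.add_mod_right]
    have hreach1 : ∀ s s', Relation.ReflTransGen (GDR1 blkOf A B r)
        (GDc1 A B r.val s) (GDc1 A B r.val s') :=
      GD_cyc_reach _ _ (2*t) (by omega) hstep1 hper1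
    have hcov1 : ∀ (b : Bool) (j : Fin t), ∃ s, GDc1 A B r.val s = GDsv A B b j := by
      intro b j
      by_cases hp : decide (GDflips t r.val j.val % 2 = 0) = b
      · exact ⟨j.val, by rw [GDc1, hp, Fin.cast_val_eq_self]⟩
      · refine ⟨j.val + t, ?_⟩
        rw [GDc1, GDflips_add_t t r.val _ (by omega)]
        have hcast : ((j.val + t : ℕ) : Fin t) = j := by
          rw [Nat.cast_add, Fin.natCast_self, add_zero, Fin.cast_val_eq_self]
        rw [hcast]
        congr 1
        cases b with
        | true =>
            have hP : ¬ (GDflips t r.val j.val % 2 = 0) := by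
              intro hP; exact hp (by rw [decide_eq_true hP])
            exact decide_eq_true (by omega)
        | false =>
            have hP : GDflips t r.val j.val % 2 = 0 := by
              by_contra hP; exact hp (decide_eq_false hP)
            exact decide_eq_false (by omega)
    have hconn1 : ∀ x : W, (∃ s, Relation.ReflTransGen (GDR1 blkOf A B r) x (GDc1 A B r.val s)) ∧
        (∃ s, Relation.ReflTransGen (GDR1 blkOf A B r) (GDc1 A B r.val s) x) := by
      intro x
      rcases tricho x with hx | hx | hx
      · obtain ⟨s, hs⟩ := hcov1 true (blkOf x)
        rw [GDsv_true, ← hx] at hs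
        exact ⟨⟨s, by rw [hs]⟩, ⟨s, by rw [hs]⟩⟩
      · obtain ⟨s, hs⟩ := hcov1 false (blkOf x)
        rw [GDsv_false, ← hx] at hs
        exact ⟨⟨s, by rw [hs]⟩, ⟨s, by rw [hs]⟩⟩
      · constructor
        · obtain ⟨s, hs⟩ := hcov1 true (blkOf x + 1)
          rw [GDsv_true] at hs
          refine ⟨s, ?_⟩
          rw [hs]
          exact Relation.ReflTransGen.single
            (Or.inr (Or.inr (Or.inr (Or.inr ⟨blkOf x, hx, rfl⟩))))
        · obtain ⟨s, hs⟩ := hcov1 false (blkOf x - 1)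
          rw [GDsv_false] at hs
          refine ⟨s, ?_⟩
          rw [hs]
          refine Relation.ReflTransGen.single
            (Or.inr (Or.inr (Or.inr (Or.inl ⟨blkOf x - 1, rfl, ?_⟩))))
          rw [sub_add_cancel]
          exact hx
    intro x y
    obtain ⟨⟨s1, hx1⟩, -⟩ := hconn1 x
    obtain ⟨-, ⟨s2, hy2⟩⟩ := hconn1 y
    exact hx1.trans ((hreach1 s1 s2).trans hy2)
  · -- R2 strong
    obtain ⟨t2, ht2⟩ := hto
    have hstep2 : ∀ (b : Bool) (s : ℕ),
        GDR2 blkOf A B r m (GDd1 A B r.val b s) (GDd1 A B r.val b (s+1)) :=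
      fun b s => GDd1_step blkOf A B r m b s
    have hper2 : ∀ (b : Bool) (s : ℕ), GDd1 A B r.val b (s + t) = GDd1 A B r.val b s := by
      intro b s
      have h1 : GDflips t r.val (s + t) = GDflips t r.val s + 1 :=
        GDflips_add_t t r.val s (by omega)
      have h2 : ((s + t : ℕ) : Fin t) = (s : Fin t) := by
        rw [Nat.cast_add, Fin.natCast_self, add_zero]
      unfold GDd1
      rw [h1, h2]
      have h3 : s + t + (GDflips t r.val s + 1) = s + GDflips t r.val s + 2 * (t2+1) := by
        omega
      rw [h3, Nat.add_mul_mod_self_left]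
    have hreach2 : ∀ b s s', Relation.ReflTransGen (GDR2 blkOf A B r m)
        (GDd1 A B r.val b s) (GDd1 A B r.val b s') :=
      fun b => GD_cyc_reach _ _ t (by omega) (hstep2 b) (hper2 b)
    have hflips0 : GDflips t r.val 0 = 0 := by
      unfold GDflips
      simp
    have hd1t0 : GDd1 A B r.val true 0 = A 0 := by
      unfold GDd1
      rw [hflips0]
      norm_num
    have hd1f0 : GDd1 A B r.val false 0 = B 0 := by
      unfold GDd1
      rw [hflips0]
      norm_num
    have hmne : m.val ≠ 0 := by
      intro h
      exact hm (Fin.ext (by simp [h]))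
    have hkeym : (m.val + GDflips t r.val m.val) % 2 = 1 := by
      have hmlt := m.isLt
      unfold GDflips
      rw [Nat.div_eq_of_lt hmlt, Nat.mod_eq_of_lt hmlt]
      by_cases hpar : m.val % 2 = 0
      · rw [hr, if_pos hpar, Fin.val_zero, if_pos (Nat.pos_of_ne_zero hmne)]
        omega
      · rw [hr, if_neg hpar, if_neg (lt_irrefl m.val)]
        omega
    have hd1tm : GDd1 A B r.val true m.val = B m := by
      unfold GDd1
      rw [Fin.cast_val_eq_self, decide_eq_true hkeym, Bool.xor_true, Bool.not_true, GDsv_false]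
    have hd1fm : GDd1 A B r.val false m.val = A m := by
      unfold GDd1
      rw [Fin.cast_val_eq_self, decide_eq_true hkeym, Bool.xor_true, Bool.not_false, GDsv_true]
    have harcAB : GDR2 blkOf A B r m (A 0) (B 0) :=
      Or.inr (Or.inr (Or.inr (Or.inr (Or.inr (Or.inl ⟨rfl, rfl⟩)))))
    have harcm2 : GDR2 blkOf A B r m (A m) (B m) :=
      Or.inr (Or.inr (Or.inr (Or.inr (Or.inr (Or.inr ⟨rfl, rfl⟩)))))
    have hcross : ∀ (b b' : Bool) (s s' : ℕ), Relation.ReflTransGen (GDR2 blkOf A B r m)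
        (GDd1 A B r.val b s) (GDd1 A B r.val b' s') := by
      intro b b' s s'
      by_cases hbb : b = b'
      · rw [hbb]; exact hreach2 b' s s'
      · cases b with
        | true =>
            have hb' : b' = false := by cases b' <;> simp_all
            subst hb'
            have p1 := hreach2 true s 0
            rw [hd1t0] at p1
            have p2 := hreach2 false 0 s'
            rw [hd1f0] at p2
            exact p1.trans ((Relation.ReflTransGen.single harcAB).trans p2)
        | false =>
            have hb' : b' = true := by cases b' <;> simp_all
            subst hb'
            have p1 := hreach2 false s m.val
            rw [hd1fm] at p1
            have p2 := hreach2 true m.val s'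
            rw [hd1tm] at p2
            exact p1.trans ((Relation.ReflTransGen.single harcm2).trans p2)
    have hcov2 : ∀ (b : Bool) (j : Fin t), ∃ b0 s, GDd1 A B r.val b0 s = GDsv A B b j := by
      intro b j
      refine ⟨xor b (decide ((j.val + GDflips t r.val j.val) % 2 = 1)), j.val, ?_⟩
      unfold GDd1
      rw [Fin.cast_val_eq_self, Bool.xor_assoc, Bool.xor_self, Bool.xor_false]
    have hconn2 : ∀ x : W,
        (∃ b s, Relation.ReflTransGen (GDR2 blkOf A B r m) x (GDd1 A B r.val b s)) ∧
        (∃ b s, Relation.ReflTransGen (GDR2 blkOf A B r m) (GDd1 A B r.val b s) x) := by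
      intro x
      rcases tricho x with hx | hx | hx
      · obtain ⟨b0, s, hs⟩ := hcov2 true (blkOf x)
        rw [GDsv_true, ← hx] at hs
        exact ⟨⟨b0, s, by rw [hs]⟩, ⟨b0, s, by rw [hs]⟩⟩
      · obtain ⟨b0, s, hs⟩ := hcov2 false (blkOf x)
        rw [GDsv_false, ← hx] at hs
        exact ⟨⟨b0, s, by rw [hs]⟩, ⟨b0, s, by rw [hs]⟩⟩
      · constructor
        · obtain ⟨b0, s, hs⟩ := hcov2 false (blkOf x + 1)
          rw [GDsv_false] at hs
          refine ⟨b0, s, ?_⟩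
          rw [hs]
          exact Relation.ReflTransGen.single
            (Or.inr (Or.inr (Or.inr (Or.inr (Or.inl ⟨blkOf x, hx, rfl⟩)))))
        · obtain ⟨b0, s, hs⟩ := hcov2 true (blkOf x - 1)
          rw [GDsv_true] at hs
          refine ⟨b0, s, ?_⟩
          rw [hs]
          refine Relation.ReflTransGen.single
            (Or.inr (Or.inr (Or.inr (Or.inl ⟨blkOf x - 1, rfl, ?_⟩))))
          rw [sub_add_cancel]
          exact hx
    intro x y
    obtain ⟨⟨b1, s1, hx1⟩, -⟩ := hconn2 x
    obtain ⟨-, ⟨b2, s2, hy2⟩⟩ := hconn2 y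
    exact hx1.trans ((hcross b1 b2 s1 s2).trans hy2)

theorem stmt_4 {t : ℕ} (ht : 3 ≤ t) (hto : Odd t) {Vt : Fin t → Type*}
    [∀ i, Fintype (Vt i)]
    (T : Fin t → Fin t → Prop) (hT : Irreflexive T) (hTham : HasHamCycle T)
    (H : ∀ i, Vt i → Vt i → Prop) (hH : ∀ i, Irreflexive (H i))
    (hcard : ∀ i, 2 ≤ Fintype.card (Vt i))
    (harcs : ∃ i j : Fin t, i ≠ j ∧ (∃ x y, H i x y) ∧ (∃ x y, H j x y)) :
    GoodDecomp (CompArc T H) := by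
  classical
  haveI : NeZero t := ⟨by omega⟩
  obtain ⟨e, he⟩ := hTham
  obtain ⟨i₀, j₀, hij, ⟨x₀, y₀, hx0⟩, ⟨x₁, y₁, hx1⟩⟩ := harcs
  set P : Fin t := e.symm i₀ with hP
  set ε : Equiv.Perm (Fin t) := (Equiv.addRight P).trans e with hεdef
  have hfinSucc : ∀ x : Fin t, finSucc x = x + 1 := by
    intro x
    apply Fin.ext
    rw [Fin.add_def, Fin.val_one']
    show (x.val + 1) % t = (x.val + 1 % t) % t
    rw [Nat.mod_eq_of_lt (show 1 < t by omega)]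
  have hεapp : ∀ j : Fin t, ε j = e (j + P) := fun j => rfl
  have hham : ∀ j : Fin t, T (ε j) (ε (j + 1)) := by
    intro j
    have h := he (j + P)
    rw [hfinSucc] at h
    have h2 : j + P + 1 = (j + 1) + P := by ring
    rw [h2] at h
    exact h
  set m : Fin t := e.symm j₀ - P with hmdef
  have hε0 : ε 0 = i₀ := by
    rw [hεapp, zero_add, hP, Equiv.apply_symm_apply]
  have hεm : ε m = j₀ := by
    rw [hεapp, hmdef, sub_add_cancel, Equiv.apply_symm_apply]
  have hm0 : m ≠ 0 := by
    intro h
    apply hij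
    rw [← hε0, ← hεm, h]
  have hpick : ∀ j : Fin t, ∃ uv : Vt (ε j) × Vt (ε j), uv.1 ≠ uv.2 := by
    intro j
    obtain ⟨a, b, hab⟩ := Fintype.one_lt_card_iff.mp
      (show 1 < Fintype.card (Vt (ε j)) by have := hcard (ε j); omega)
    exact ⟨(a, b), hab⟩
  choose uv huv using hpick
  have hx0ne : x₀ ≠ y₀ := fun h => hH i₀ y₀ (h ▸ hx0)
  have hx1ne : x₁ ≠ y₁ := fun h => hH j₀ y₁ (h ▸ hx1)
  set α : ∀ j : Fin t, Vt (ε j) :=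
    Function.update (Function.update (fun j => (uv j).1) 0 (cast (congrArg Vt hε0.symm) x₀))
      m (cast (congrArg Vt hεm.symm) x₁) with hα
  set β : ∀ j : Fin t, Vt (ε j) :=
    Function.update (Function.update (fun j => (uv j).2) 0 (cast (congrArg Vt hε0.symm) y₀))
      m (cast (congrArg Vt hεm.symm) y₁) with hβ
  have hα0 : α 0 = cast (congrArg Vt hε0.symm) x₀ := by
    rw [hα, Function.update_of_ne (Ne.symm hm0), Function.update_self]
  have hβ0 : β 0 = cast (congrArg Vt hε0.symm) y₀ := by
    rw [hβ, Function.update_of_ne (Ne.symm hm0), Function.update_self]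
  have hαm : α m = cast (congrArg Vt hεm.symm) x₁ := by
    rw [hα, Function.update_self]
  have hβm : β m = cast (congrArg Vt hεm.symm) y₁ := by
    rw [hβ, Function.update_self]
  have hABne : ∀ j : Fin t, α j ≠ β j := by
    intro j
    by_cases hjm : j = m
    · subst hjm
      rw [hαm, hβm]
      exact fun h => hx1ne ((cast_inj _).mp h)
    by_cases hj0 : j = 0
    · subst hj0
      rw [hα0, hβ0]
      exact fun h => hx0ne ((cast_inj _).mp h)
    · rw [hα, hβ, Function.update_of_ne hjm, Function.update_of_ne hjm,
        Function.update_of_ne hj0, Function.update_of_ne hj0]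
      exact huv j
  have hH0 : H (ε 0) (α 0) (β 0) := by
    rw [hα0, hβ0]
    have key : ∀ (i : Fin t) (h : i = i₀),
        H i (cast (congrArg Vt h.symm) x₀) (cast (congrArg Vt h.symm) y₀) := by
      rintro i rfl
      simpa using hx0
    exact key (ε 0) hε0
  have hHm : H (ε m) (α m) (β m) := by
    rw [hαm, hβm]
    have key : ∀ (i : Fin t) (h : i = j₀),
        H i (cast (congrArg Vt h.symm) x₁) (cast (congrArg Vt h.symm) y₁) := by
      rintro i rfl
      simpa using hx1
    exact key (ε m) hεm
  refine GD_core ht hto (CompArc T H) (fun w => ε.symm w.1)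
    (fun j => ⟨ε j, α j⟩) (fun j => ⟨ε j, β j⟩) ?_ ?_ ?_ ?_ m hm0 ?_ ?_
  · intro j; simp
  · intro j; simp
  · intro j h
    rw [Sigma.mk.inj_iff] at h
    exact hABne j (eq_of_heq h.2)
  · intro x y hxy
    refine Or.inl ?_
    have hx : x.1 = ε (ε.symm x.1) := (Equiv.apply_symm_apply ε x.1).symm
    have hy : y.1 = ε (ε.symm x.1 + 1) := by
      rw [← hxy, Equiv.apply_symm_apply]
    rw [hx, hy]
    exact hham (ε.symm x.1)
  · exact Or.inr ⟨rfl, hH0⟩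
  · exact Or.inr ⟨rfl, hHm⟩
end

section
/- The digraph Q = C3[P2, K2bar, K2bar], the composition of the directed 3-cycle with the single-arc digraph on 2 vertices and two arcless digraphs on 2 vertices, does not have a pair of arc-disjoint strong spanning subdigraphs. -/
private def pa : Fin 3 × Fin 2 := (0,0)
private def pb : Fin 3 × Fin 2 := (0,1)
private def pc : Fin 3 × Fin 2 := (1,0)
private def pd : Fin 3 × Fin 2 := (1,1)
private def pe : Fin 3 × Fin 2 := (2,0)
private def pf : Fin 3 × Fin 2 := (2,1)

private lemma myHead {α : Type*} {A : α → α → Prop} {x y : α} (hne : x ≠ y)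
    (h : Relation.ReflTransGen A x y) : ∃ z, A x z := by
  rcases h.cases_head with h' | ⟨z, hz, _⟩
  · exact absurd h' hne
  · exact ⟨z, hz⟩

private lemma myTail {α : Type*} {A : α → α → Prop} {x y : α} (hne : x ≠ y)
    (h : Relation.ReflTransGen A x y) : ∃ z, A z y := by
  rcases h.cases_tail with h' | ⟨z, _, hz⟩
  · exact absurd h'.symm hne
  · exact ⟨z, hz⟩

private lemma myClosed {α : Type*} {A : α → α → Prop} {S : α → Prop} {x y : α}
    (hx : S x) (hcl : ∀ u v, S u → A u v → S v)
    (h : Relation.ReflTransGen A x y) : S y := by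
  induction h with
  | refl => exact hx
  | tail _ step ih => exact hcl _ _ ih step

private lemma nb_out : ∀ w, Exc2 pb w → w = pc ∨ w = pd := by unfold Exc2; decide
private lemma nc_out : ∀ w, Exc2 pc w → w = pe ∨ w = pf := by unfold Exc2; decide
private lemma nd_out : ∀ w, Exc2 pd w → w = pe ∨ w = pf := by unfold Exc2; decide
private lemma ne_out : ∀ w, Exc2 pe w → w = pa ∨ w = pb := by unfold Exc2; decide
private lemma nf_out : ∀ w, Exc2 pf w → w = pa ∨ w = pb := by unfold Exc2; decide
private lemma na_in : ∀ u, Exc2 u pa → u = pe ∨ u = pf := by unfold Exc2; decide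
private lemma nc_in : ∀ u, Exc2 u pc → u = pa ∨ u = pb := by unfold Exc2; decide
private lemma nd_in : ∀ u, Exc2 u pd → u = pa ∨ u = pb := by unfold Exc2; decide
private lemma ne_in : ∀ u, Exc2 u pe → u = pc ∨ u = pd := by unfold Exc2; decide
private lemma nf_in : ∀ u, Exc2 u pf → u = pc ∨ u = pd := by unfold Exc2; decide

private lemma key (A₁ A₂ : Fin 3 × Fin 2 → Fin 3 × Fin 2 → Prop)
    (h1 : ∀ x y, A₁ x y → Exc2 x y) (h2 : ∀ x y, A₂ x y → Exc2 x y)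
    (hd : ∀ x y, ¬ (A₁ x y ∧ A₂ x y))
    (hs1 : IsStrong A₁) (hs2 : IsStrong A₂)
    (hac : A₁ pa pc) : False := by
  -- A₂'s in-arc at c must be b→c
  obtain ⟨u, hu⟩ := myTail (show pa ≠ pc by decide) (hs2 pa pc)
  rcases nc_in u (h2 _ _ hu) with rfl | rfl
  · exact hd _ _ ⟨hac, hu⟩
  have hbc2 : A₂ pb pc := hu
  -- A₁'s out-arc at b must be b→d
  obtain ⟨w, hw⟩ := myHead (show pb ≠ pa by decide) (hs1 pb pa)
  rcases nb_out w (h1 _ _ hw) with rfl | rfl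
  · exact hd _ _ ⟨hw, hbc2⟩
  have hbd1 : A₁ pb pd := hw
  -- A₂'s in-arc at d must be a→d
  obtain ⟨u1, hu1⟩ := myTail (show pa ≠ pd by decide) (hs2 pa pd)
  rcases nd_in u1 (h2 _ _ hu1) with rfl | rfl
  case inr => exact hd _ _ ⟨hbd1, hu1⟩
  have had2 : A₂ pa pd := hu1
  -- branch on A₁'s out-arc at e
  obtain ⟨w1, hw1⟩ := myHead (show pe ≠ pa by decide) (hs1 pe pa)
  rcases ne_out w1 (h1 _ _ hw1) with rfl | rfl
  · -- Branch I : A₁ e→a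
    have hea1 : A₁ pe pa := hw1
    -- A₂'s out-arc at e must be e→b
    obtain ⟨w2, hw2⟩ := myHead (show pe ≠ pa by decide) (hs2 pe pa)
    rcases ne_out w2 (h2 _ _ hw2) with rfl | rfl
    · exact hd _ _ ⟨hea1, hw2⟩
    have heb2 : A₂ pe pb := hw2
    -- A₂'s in-arc at a must be f→a
    obtain ⟨u2, hu2⟩ := myTail (show pe ≠ pa by decide) (hs2 pe pa)
    rcases na_in u2 (h2 _ _ hu2) with rfl | rfl
    · exact hd _ _ ⟨hea1, hu2⟩
    have hfa2 : A₂ pf pa := hu2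
    -- branch on A₁'s out-arc at c
    obtain ⟨w4, hw4⟩ := myHead (show pc ≠ pa by decide) (hs1 pc pa)
    rcases nc_out w4 (h1 _ _ hw4) with rfl | rfl
    · -- I.1 : A₁ c→e ; then A₂'s in-arc at e is d→e
      have hce1 : A₁ pc pe := hw4
      obtain ⟨u3, hu3⟩ := myTail (show pa ≠ pe by decide) (hs2 pa pe)
      rcases ne_in u3 (h2 _ _ hu3) with rfl | rfl
      · exact hd _ _ ⟨hce1, hu3⟩
      have hde2 : A₂ pd pe := hu3
      -- {b,d,f} is closed under A₁, so b cannot reach a in A₁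
      have hcl : ∀ x y, (x = pb ∨ x = pd ∨ x = pf) → A₁ x y →
          (y = pb ∨ y = pd ∨ y = pf) := by
        rintro x y (rfl | rfl | rfl) h
        · rcases nb_out y (h1 _ _ h) with rfl | rfl
          · exact absurd ⟨h, hbc2⟩ (hd _ _)
          · exact Or.inr (Or.inl rfl)
        · rcases nd_out y (h1 _ _ h) with rfl | rfl
          · exact absurd ⟨h, hde2⟩ (hd _ _)
          · exact Or.inr (Or.inr rfl)
        · rcases nf_out y (h1 _ _ h) with rfl | rfl
          · exact absurd ⟨h, hfa2⟩ (hd _ _)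
          · exact Or.inl rfl
      exact absurd (myClosed (S := fun v => v = pb ∨ v = pd ∨ v = pf) (Or.inl rfl) hcl (hs1 pb pa)) (by decide)
    · -- I.2 : A₁ c→f ; {b,c,e} is closed under A₂
      have hcf1 : A₁ pc pf := hw4
      have hcl : ∀ x y, (x = pb ∨ x = pc ∨ x = pe) → A₂ x y →
          (y = pb ∨ y = pc ∨ y = pe) := by
        rintro x y (rfl | rfl | rfl) h
        · rcases nb_out y (h2 _ _ h) with rfl | rfl
          · exact Or.inr (Or.inl rfl)
          · exact absurd ⟨hbd1, h⟩ (hd _ _)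
        · rcases nc_out y (h2 _ _ h) with rfl | rfl
          · exact Or.inr (Or.inr rfl)
          · exact absurd ⟨hcf1, h⟩ (hd _ _)
        · rcases ne_out y (h2 _ _ h) with rfl | rfl
          · exact absurd ⟨hea1, h⟩ (hd _ _)
          · exact Or.inl rfl
      exact absurd (myClosed (S := fun v => v = pb ∨ v = pc ∨ v = pe) (Or.inl rfl) hcl (hs2 pb pa)) (by decide)
  · -- Branch II : A₁ e→b
    have heb1 : A₁ pe pb := hw1
    -- A₂'s out-arc at e must be e→a
    obtain ⟨w2, hw2⟩ := myHead (show pe ≠ pa by decide) (hs2 pe pa)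
    rcases ne_out w2 (h2 _ _ hw2) with rfl | rfl
    case inr => exact hd _ _ ⟨heb1, hw2⟩
    have hea2 : A₂ pe pa := hw2
    -- A₁'s in-arc at a must be f→a
    obtain ⟨u2, hu2⟩ := myTail (show pe ≠ pa by decide) (hs1 pe pa)
    rcases na_in u2 (h1 _ _ hu2) with rfl | rfl
    · exact hd _ _ ⟨hu2, hea2⟩
    have hfa1 : A₁ pf pa := hu2
    -- branch on A₁'s out-arc at c
    obtain ⟨w4, hw4⟩ := myHead (show pc ≠ pa by decide) (hs1 pc pa)
    rcases nc_out w4 (h1 _ _ hw4) with rfl | rfl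
    · -- II.1 : A₁ c→e ; {b,c,f} is closed under A₂
      have hce1 : A₁ pc pe := hw4
      have hcl : ∀ x y, (x = pb ∨ x = pc ∨ x = pf) → A₂ x y →
          (y = pb ∨ y = pc ∨ y = pf) := by
        rintro x y (rfl | rfl | rfl) h
        · rcases nb_out y (h2 _ _ h) with rfl | rfl
          · exact Or.inr (Or.inl rfl)
          · exact absurd ⟨hbd1, h⟩ (hd _ _)
        · rcases nc_out y (h2 _ _ h) with rfl | rfl
          · exact absurd ⟨hce1, h⟩ (hd _ _)
          · exact Or.inr (Or.inr rfl)
        · rcases nf_out y (h2 _ _ h) with rfl | rfl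
          · exact absurd ⟨hfa1, h⟩ (hd _ _)
          · exact Or.inl rfl
      exact absurd (myClosed (S := fun v => v = pb ∨ v = pc ∨ v = pf) (Or.inl rfl) hcl (hs2 pb pa)) (by decide)
    · -- II.2 : A₁ c→f ; then A₂'s in-arc at f is d→f, and {b,d,e} closed under A₁
      have hcf1 : A₁ pc pf := hw4
      obtain ⟨u3, hu3⟩ := myTail (show pa ≠ pf by decide) (hs2 pa pf)
      rcases nf_in u3 (h2 _ _ hu3) with rfl | rfl
      · exact hd _ _ ⟨hcf1, hu3⟩
      have hdf2 : A₂ pd pf := hu3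
      have hcl : ∀ x y, (x = pb ∨ x = pd ∨ x = pe) → A₁ x y →
          (y = pb ∨ y = pd ∨ y = pe) := by
        rintro x y (rfl | rfl | rfl) h
        · rcases nb_out y (h1 _ _ h) with rfl | rfl
          · exact absurd ⟨h, hbc2⟩ (hd _ _)
          · exact Or.inr (Or.inl rfl)
        · rcases nd_out y (h1 _ _ h) with rfl | rfl
          · exact Or.inr (Or.inr rfl)
          · exact absurd ⟨h, hdf2⟩ (hd _ _)
        · rcases ne_out y (h1 _ _ h) with rfl | rfl
          · exact absurd ⟨h, hea2⟩ (hd _ _)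
          · exact Or.inl rfl
      exact absurd (myClosed (S := fun v => v = pb ∨ v = pd ∨ v = pe) (Or.inl rfl) hcl (hs1 pb pa)) (by decide)

theorem stmt_5 : ¬ GoodDecomp Exc2 := by
  rintro ⟨A₁, A₂, h1, h2, hd, hs1, hs2⟩
  obtain ⟨u, hu⟩ := myTail (show pa ≠ pc by decide) (hs1 pa pc)
  rcases nc_in u (h1 _ _ hu) with rfl | rfl
  · exact key A₁ A₂ h1 h2 hd hs1 hs2 hu
  · obtain ⟨u2, hu2⟩ := myTail (show pa ≠ pc by decide) (hs2 pa pc)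
    rcases nc_in u2 (h2 _ _ hu2) with rfl | rfl
    · exact key A₂ A₁ h2 h1 (fun x y h => hd x y ⟨h.2, h.1⟩) hs2 hs1 hu2
    · exact hd _ _ ⟨hu, hu2⟩
end

section
/- The digraph Q = C3[K2bar, K2bar, K3bar], the composition of the directed 3-cycle with two arcless digraphs on 2 vertices and one arcless digraph on 3 vertices, does not have a pair of arc-disjoint strong spanning subdigraphs. -/
-- auxiliary
abbrev V3 := Fin 2 ⊕ Fin 2 ⊕ Fin 3
def Av (i : Fin 2) : V3 := Sum.inl i
def Bv (k : Fin 2) : V3 := Sum.inr (Sum.inl k)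
def Cv (j : Fin 3) : V3 := Sum.inr (Sum.inr j)

instance : DecidableRel Exc3 := fun p q => decidable_of_iff (blk q = finSucc (blk p)) Iff.rfl

lemma rtg_first {α} {S : α → α → Prop} {x y : α} (h : Relation.ReflTransGen S x y)
    (hxy : x ≠ y) : ∃ z, S x z := by
  rcases h.cases_head with rfl | ⟨z, hz, _⟩
  · exact absurd rfl hxy
  · exact ⟨z, hz⟩

lemma rtg_last {α} {S : α → α → Prop} {x y : α} (h : Relation.ReflTransGen S x y)
    (hxy : x ≠ y) : ∃ z, S z y := by
  induction h with
  | refl => exact absurd rfl hxy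
  | tail _ hstep _ => exact ⟨_, hstep⟩

lemma two_elt {α} {S : α → α → Prop} {p q : α}
    (hstep : ∀ x y, S x y → (x = p ∨ x = q) → (y = p ∨ y = q))
    (hpq : p ≠ q) (h : Relation.ReflTransGen S p q) : S p q := by
  have H : ∀ x, Relation.ReflTransGen S x q → (x = p ∨ x = q) → (x = q ∨ S x q) := by
    intro x hx
    induction hx using Relation.ReflTransGen.head_induction_on with
    | refl => exact fun _ => Or.inl rfl
    | head h' h'' ih =>
      intro hmem
      have hmem' := hstep _ _ h' hmem
      rcases ih hmem' with rfl | hq2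
      · exact Or.inr h'
      · rcases hmem' with rfl | rfl
        · rcases hmem with rfl | rfl
          · exact Or.inr hq2
          · exact Or.inl rfl
        · exact Or.inr h'
  rcases H p h (Or.inl rfl) with rfl | h'
  · exact absurd rfl hpq
  · exact h'

def Rrel (S : V3 → V3 → Prop) : V3 → V3 → Prop :=
  fun u v => ∃ c a, S u c ∧ S c a ∧ S a v

lemma contract {S : V3 → V3 → Prop} (hS : ∀ x y, S x y → Exc3 x y) {y : V3}
    (hy : blk y = 1) :
    ∀ x, Relation.ReflTransGen S x y →
      (blk x = 1 → Relation.ReflTransGen (Rrel S) x y) ∧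
      (blk x = 2 → ∃ a b, S x a ∧ S a b ∧ Relation.ReflTransGen (Rrel S) b y) ∧
      (blk x = 0 → ∃ b, S x b ∧ Relation.ReflTransGen (Rrel S) b y) := by
  intro x h
  induction h using Relation.ReflTransGen.head_induction_on with
  | refl =>
    refine ⟨fun _ => .refl, fun h2 => ?_, fun h0 => ?_⟩
    · rw [hy] at h2; exact absurd h2 (by decide)
    · rw [hy] at h0; exact absurd h0 (by decide)
  | head h' h'' ih =>
    rename_i a c
    have hblk : blk c = finSucc (blk a) := hS _ _ h'
    refine ⟨fun h1 => ?_, fun h2 => ?_, fun h0 => ?_⟩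
    · have hc : blk c = 2 := by rw [hblk, h1]; decide
      obtain ⟨aa, bb, g2, g3, g4⟩ := ih.2.1 hc
      exact Relation.ReflTransGen.head ⟨_, aa, h', g2, g3⟩ g4
    · have hc : blk c = 0 := by rw [hblk, h2]; decide
      obtain ⟨bb, g3, g4⟩ := ih.2.2 hc
      exact ⟨_, bb, h', g3, g4⟩
    · have hc : blk c = 1 := by rw [hblk, h0]; decide
      exact ⟨_, h', ih.1 hc⟩

-- structural facts about Exc3
lemma exc_in_c : ∀ (x : V3) (j : Fin 3), Exc3 x (Cv j) → x = Bv 0 ∨ x = Bv 1 := by decide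
lemma exc_out_c : ∀ (j : Fin 3) (y : V3), Exc3 (Cv j) y → y = Av 0 ∨ y = Av 1 := by decide
lemma exc_out_a : ∀ (i : Fin 2) (y : V3), Exc3 (Av i) y → y = Bv 0 ∨ y = Bv 1 := by decide
lemma exc_in_b : ∀ (x : V3) (k : Fin 2), Exc3 x (Bv k) → x = Av 0 ∨ x = Av 1 := by decide
lemma blk2_form : ∀ x : V3, blk x = 2 → ∃ j, x = Cv j := by decide
lemma blk1_form : ∀ x : V3, blk x = 1 → x = Bv 0 ∨ x = Bv 1 := by decide
lemma ne_exists : ∀ x : V3, ∃ y : V3, y ≠ x := by decide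
lemma pigeon3 : ∀ j1 j2 j3 j4 : Fin 3,
    j1 = j2 ∨ j1 = j3 ∨ j1 = j4 ∨ j2 = j3 ∨ j2 = j4 ∨ j3 = j4 := by decide
lemma fin2_cases : ∀ i i' k : Fin 2, i ≠ i' → k = i ∨ k = i' := by decide

section Main
variable {S T : V3 → V3 → Prop}

lemma str_out (hsS : IsStrong S) : ∀ x : V3, ∃ z, S x z := by
  intro x
  obtain ⟨y, hy⟩ := ne_exists x
  exact rtg_first (hsS x y) (fun h => hy h.symm)

lemma str_in (hsS : IsStrong S) : ∀ x : V3, ∃ z, S z x := by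
  intro x
  obtain ⟨y, hy⟩ := ne_exists x
  exact rtg_last (hsS y x) hy

/-- each `Cv j` has at most one out-neighbour in `S` (given `T` needs one too). -/
lemma Uc (hS : ∀ x y, S x y → Exc3 x y) (hT : ∀ x y, T x y → Exc3 x y)
    (hd : ∀ x y, ¬ (S x y ∧ T x y)) (hsT : IsStrong T) :
    ∀ (j : Fin 3) (u v : V3), S (Cv j) u → S (Cv j) v → u = v := by
  intro j u v hu hv
  obtain ⟨z, hz⟩ := str_out hsT (Cv j)
  rcases exc_out_c j u (hS _ _ hu) with rfl | rfl <;>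
    rcases exc_out_c j v (hS _ _ hv) with rfl | rfl <;>
      rcases exc_out_c j z (hT _ _ hz) with rfl | rfl <;>
        first
          | rfl
          | exact absurd hz (fun h => hd _ _ ⟨hu, h⟩)
          | exact absurd hz (fun h => hd _ _ ⟨hv, h⟩)

/-- each `Av i` has at most one out-neighbour in `S`. -/
lemma Ua (hS : ∀ x y, S x y → Exc3 x y) (hT : ∀ x y, T x y → Exc3 x y)
    (hd : ∀ x y, ¬ (S x y ∧ T x y)) (hsT : IsStrong T) :
    ∀ (i : Fin 2) (u v : V3), S (Av i) u → S (Av i) v → u = v := by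
  intro i u v hu hv
  obtain ⟨z, hz⟩ := str_out hsT (Av i)
  rcases exc_out_a i u (hS _ _ hu) with rfl | rfl <;>
    rcases exc_out_a i v (hS _ _ hv) with rfl | rfl <;>
      rcases exc_out_a i z (hT _ _ hz) with rfl | rfl <;>
        first
          | rfl
          | exact absurd hz (fun h => hd _ _ ⟨hu, h⟩)
          | exact absurd hz (fun h => hd _ _ ⟨hv, h⟩)

/-- each `Cv j` has at most one in-neighbour in `S`. -/
lemma inUc (hS : ∀ x y, S x y → Exc3 x y) (hT : ∀ x y, T x y → Exc3 x y)
    (hd : ∀ x y, ¬ (S x y ∧ T x y)) (hsT : IsStrong T) :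
    ∀ (j : Fin 3) (k k' : Fin 2), S (Bv k) (Cv j) → S (Bv k') (Cv j) → k = k' := by
  intro j k k' hu hv
  obtain ⟨z, hz⟩ := str_in hsT (Cv j)
  rcases exc_in_c z j (hT _ _ hz) with rfl | rfl <;>
    rcases Fin.exists_fin_two.mp ⟨k, rfl⟩ with rfl | rfl <;>
      rcases Fin.exists_fin_two.mp ⟨k', rfl⟩ with rfl | rfl <;>
        first
          | rfl
          | exact absurd hz (fun h => hd _ _ ⟨hu, h⟩)
          | exact absurd hz (fun h => hd _ _ ⟨hv, h⟩)

/-- the `Av → Bv` arcs of `S` form a matching. -/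
lemma Bij (hS : ∀ x y, S x y → Exc3 x y) (hT : ∀ x y, T x y → Exc3 x y)
    (hd : ∀ x y, ¬ (S x y ∧ T x y)) (hsS : IsStrong S) (hsT : IsStrong T) :
    ∀ (i i' : Fin 2) (b : V3), S (Av i) b → S (Av i') b → i = i' := by
  intro i i' b h h'
  by_contra hne
  have hUa := Ua hS hT hd hsT
  obtain ⟨k, k', hkk', rfl⟩ : ∃ k k' : Fin 2, k ≠ k' ∧ b = Bv k := by
    rcases exc_out_a i b (hS _ _ h) with rfl | rfl
    · exact ⟨0, 1, by decide, rfl⟩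
    · exact ⟨1, 0, by decide, rfl⟩
  obtain ⟨x, hx⟩ := str_in hsS (Bv k')
  have hxa := exc_in_b x k' (hS _ _ hx)
  have heq : Bv k' = Bv k := by
    rcases hxa with rfl | rfl
    · rcases fin2_cases i i' 0 hne with h0 | h0
      · exact hUa i _ _ (h0 ▸ hx) h
      · exact hUa i' _ _ (h0 ▸ hx) h'
    · rcases fin2_cases i i' 1 hne with h1 | h1
      · exact hUa i _ _ (h1 ▸ hx) h
      · exact hUa i' _ _ (h1 ▸ hx) h'
  simp only [Bv, Sum.inr.injEq, Sum.inl.injEq] at heq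
  exact hkk' heq.symm

end Main

section Main2
variable {S T : V3 → V3 → Prop}

/-- transfer of the 2-step route from `Cv j` to `Bv k` between the two parts. -/
lemma beta (hS : ∀ x y, S x y → Exc3 x y) (hT : ∀ x y, T x y → Exc3 x y)
    (hd : ∀ x y, ¬ (S x y ∧ T x y)) (hsS : IsStrong S) (hsT : IsStrong T) :
    ∀ (j : Fin 3) (k : Fin 2), (∃ a, S (Cv j) a ∧ S a (Bv k)) →
      ∃ a, T (Cv j) a ∧ T a (Bv k) := by
  intro j k ⟨a, h1, h2⟩
  obtain ⟨i, rfl⟩ : ∃ i, a = Av i := by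
    rcases exc_out_c j a (hS _ _ h1) with rfl | rfl
    · exact ⟨0, rfl⟩
    · exact ⟨1, rfl⟩
  -- T-out-neighbour of Cv j
  obtain ⟨a', ha'⟩ := str_out hsT (Cv j)
  obtain ⟨i', rfl⟩ : ∃ i', a' = Av i' := by
    rcases exc_out_c j a' (hT _ _ ha') with rfl | rfl
    · exact ⟨0, rfl⟩
    · exact ⟨1, rfl⟩
  have hii : i ≠ i' := by
    rintro rfl; exact hd _ _ ⟨h1, ha'⟩
  -- S-out-neighbour of Av i'
  obtain ⟨w1, hw1⟩ := str_out hsS (Av i')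
  obtain ⟨k1, rfl⟩ : ∃ k1, w1 = Bv k1 := by
    rcases exc_out_a i' w1 (hS _ _ hw1) with rfl | rfl
    · exact ⟨0, rfl⟩
    · exact ⟨1, rfl⟩
  have hk1 : k1 ≠ k := by
    rintro rfl; exact hii (Bij hS hT hd hsS hsT i i' _ h2 hw1)
  -- T-out-neighbour of Av i'
  obtain ⟨w2, hw2⟩ := str_out hsT (Av i')
  obtain ⟨k2, rfl⟩ : ∃ k2, w2 = Bv k2 := by
    rcases exc_out_a i' w2 (hT _ _ hw2) with rfl | rfl
    · exact ⟨0, rfl⟩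
    · exact ⟨1, rfl⟩
  have hk2 : k2 ≠ k1 := by
    rintro rfl; exact hd _ _ ⟨hw1, hw2⟩
  have : k2 = k := by
    rcases Fin.exists_fin_two.mp ⟨k, rfl⟩ with rfl | rfl <;>
      rcases Fin.exists_fin_two.mp ⟨k1, rfl⟩ with rfl | rfl <;>
        rcases Fin.exists_fin_two.mp ⟨k2, rfl⟩ with rfl | rfl <;>
          simp_all
  exact ⟨Av i', ha', this ▸ hw2⟩

/-- there is at most one `Bv k` reachable by a 2-step route from `Cv j` in `S`. -/
lemma qUnique (hS : ∀ x y, S x y → Exc3 x y) (hT : ∀ x y, T x y → Exc3 x y)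
    (hd : ∀ x y, ¬ (S x y ∧ T x y)) (hsT : IsStrong T) :
    ∀ (j : Fin 3) (k k' : Fin 2), k ≠ k' →
      (∃ a, S (Cv j) a ∧ S a (Bv k)) → (∃ a, S (Cv j) a ∧ S a (Bv k')) → False := by
  rintro j k k' hne ⟨a, h1, h2⟩ ⟨a', h1', h2'⟩
  have := Uc hS hT hd hsT j a a' h1 h1'
  subst this
  obtain ⟨i, rfl⟩ : ∃ i, a = Av i := by
    rcases exc_out_c j a (hS _ _ h1) with rfl | rfl
    · exact ⟨0, rfl⟩
    · exact ⟨1, rfl⟩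
  have := Ua hS hT hd hsT i _ _ h2 h2'
  simp only [Bv, Sum.inr.injEq, Sum.inl.injEq] at this
  exact hne this

/-- from strongness: the 3-step route between the two vertices of block 1. -/
lemma Rfact (hS : ∀ x y, S x y → Exc3 x y) (hsS : IsStrong S) :
    ∀ k k' : Fin 2, k ≠ k' → ∃ c a, S (Bv k) c ∧ S c a ∧ S a (Bv k') := by
  intro k k' hne
  have hrtg : Relation.ReflTransGen (Rrel S) (Bv k) (Bv k') :=
    (contract hS (by rfl) (Bv k) (hsS (Bv k) (Bv k'))).1 (by rfl)
  have hstep : ∀ x y, Rrel S x y → (x = Bv k ∨ x = Bv k') → (y = Bv k ∨ y = Bv k') := by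
    rintro x y ⟨c, a, h1, h2, h3⟩ hx
    have hbx : blk x = 1 := by rcases hx with rfl | rfl <;> rfl
    have h1' : blk c = finSucc (blk x) := hS _ _ h1
    have h2' : blk a = finSucc (blk c) := hS _ _ h2
    have h3' : blk y = finSucc (blk a) := hS _ _ h3
    have hby : blk y = 1 := by rw [h3', h2', h1', hbx]; decide
    rcases blk1_form y hby with rfl | rfl <;>
      rcases Fin.exists_fin_two.mp ⟨k, rfl⟩ with rfl | rfl <;>
        rcases Fin.exists_fin_two.mp ⟨k', rfl⟩ with rfl | rfl <;>
          first
            | exact Or.inl rfl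
            | exact Or.inr rfl
            | exact absurd rfl hne
  have hBne : Bv k ≠ Bv k' := by
    simp only [Bv, ne_eq, Sum.inr.injEq, Sum.inl.injEq]; exact hne
  exact two_elt hstep hBne hrtg

end Main2

theorem stmt_6' : ¬ (∃ A₁ A₂ : V3 → V3 → Prop,
    (∀ x y, A₁ x y → Exc3 x y) ∧ (∀ x y, A₂ x y → Exc3 x y) ∧
    (∀ x y, ¬ (A₁ x y ∧ A₂ x y)) ∧ IsStrong A₁ ∧ IsStrong A₂) := by
  rintro ⟨A₁, A₂, h1, h2, hd, hs1, hs2⟩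
  have hd' : ∀ x y, ¬ (A₂ x y ∧ A₁ x y) := fun x y h => hd x y ⟨h.2, h.1⟩
  -- vertex of type (p, q)
  obtain ⟨c1, a1, g1, g2, g3⟩ := Rfact h1 hs1 0 1 (by decide)
  have e1 : blk c1 = finSucc (blk (Bv 0)) := h1 _ _ g1
  obtain ⟨j1, rfl⟩ := blk2_form c1 (by rw [e1]; decide)
  have Q1 : ∃ a, A₁ (Cv j1) a ∧ A₁ a (Bv 1) := ⟨a1, g2, g3⟩
  -- vertex of type (¬p, ¬q)
  obtain ⟨c2, a2, f1, f2, f3⟩ := Rfact h1 hs1 1 0 (by decide)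
  have e2 : blk c2 = finSucc (blk (Bv 1)) := h1 _ _ f1
  obtain ⟨j2, rfl⟩ := blk2_form c2 (by rw [e2]; decide)
  have nP2 : ¬ A₁ (Bv 0) (Cv j2) := fun h =>
    absurd (inUc h1 h2 hd hs2 j2 0 1 h f1) (by decide)
  have nQ2 : ¬ (∃ a, A₁ (Cv j2) a ∧ A₁ a (Bv 1)) := fun hq =>
    qUnique h1 h2 hd hs2 j2 1 0 (by decide) hq ⟨a2, f2, f3⟩
  -- vertex of type (¬p, q)
  obtain ⟨c3, a3, m1, m2, m3⟩ := Rfact h2 hs2 0 1 (by decide)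
  have e3 : blk c3 = finSucc (blk (Bv 0)) := h2 _ _ m1
  obtain ⟨j3, rfl⟩ := blk2_form c3 (by rw [e3]; decide)
  have nP3 : ¬ A₁ (Bv 0) (Cv j3) := fun h => hd _ _ ⟨h, m1⟩
  have Q3 : ∃ a, A₁ (Cv j3) a ∧ A₁ a (Bv 1) :=
    beta h2 h1 hd' hs2 hs1 j3 1 ⟨a3, m2, m3⟩
  -- vertex of type (p, ¬q)
  obtain ⟨c4, a4, n1, n2, n3⟩ := Rfact h2 hs2 1 0 (by decide)
  have e4 : blk c4 = finSucc (blk (Bv 1)) := h2 _ _ n1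
  obtain ⟨j4, rfl⟩ := blk2_form c4 (by rw [e4]; decide)
  have P4 : A₁ (Bv 0) (Cv j4) := by
    obtain ⟨x, hx⟩ := str_in hs1 (Cv j4)
    rcases exc_in_c x j4 (h1 _ _ hx) with rfl | rfl
    · exact hx
    · exact (hd _ _ ⟨hx, n1⟩).elim
  have nQ4 : ¬ (∃ a, A₁ (Cv j4) a ∧ A₁ a (Bv 1)) := fun hq =>
    qUnique h1 h2 hd hs2 j4 1 0 (by decide) hq
      (beta h2 h1 hd' hs2 hs1 j4 0 ⟨a4, n2, n3⟩)
  -- pigeonhole: four distinct types among three vertices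
  rcases pigeon3 j1 j2 j3 j4 with h | h | h | h | h | h <;> subst h <;>
    first
      | exact nP2 g1
      | exact nP3 g1
      | exact nQ4 Q1
      | exact nQ2 Q3
      | exact nP2 P4
      | exact nP3 P4

theorem stmt_6 : ¬ GoodDecomp Exc3 := stmt_6'
end

section
/- The digraph C3[K2bar, K2bar, K2bar] (equivalently, the complete bipartite-like directed blow-up of the 3-cycle by independent sets of size 2) does not have a pair of arc-disjoint strong spanning subdigraphs. -/
/-- The successor map determined by a choice function `f`. -/
def stepFn (f : Fin 3 × Fin 2 → Fin 2) (p : Fin 3 × Fin 2) : Fin 3 × Fin 2 :=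
  (finSucc p.1, f p)

def otherFin2 (a : Fin 2) : Fin 2 := if a = 0 then 1 else 0

def BadChoice (f : Fin 3 × Fin 2 → Fin 2) : Prop :=
  (∀ x y : Fin 3 × Fin 2, ∃ n < 7, (stepFn f)^[n] x = y) ∧
  (∀ x y : Fin 3 × Fin 2, ∃ n < 7, (stepFn (fun p => otherFin2 (f p)))^[n] x = y)

instance : DecidablePred BadChoice := by
  unfold BadChoice; infer_instance

lemma fin2_eq_of_ne {u v w : Fin 2} (hu : u ≠ w) (hv : v ≠ w) : u = v := by
  revert u v w; decide

lemma otherFin2_of_ne {u w : Fin 2} (h : u ≠ w) : u = otherFin2 w := by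
  revert u w; decide

lemma iter_bound (g : Fin 3 × Fin 2 → Fin 3 × Fin 2) (x y : Fin 3 × Fin 2)
    (h : ∃ n, g^[n] x = y) : ∃ n < 7, g^[n] x = y := by
  obtain ⟨n, hn⟩ := h
  induction n using Nat.strong_induction_on generalizing y with
  | _ n ih =>
    by_cases h7 : n < 7
    · exact ⟨n, h7, hn⟩
    · push_neg at h7
      have hni : ¬ Function.Injective (fun k : Fin 7 => g^[k.val] x) := by
        intro hinj
        have hc := Fintype.card_le_of_injective _ hinj
        simp [Fintype.card_fin] at hc
      rw [Function.not_injective_iff] at hni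
      obtain ⟨i, j, hij, hne⟩ := hni
      have hrec : ∀ a b : Fin 7, (a:ℕ) < (b:ℕ) → g^[(a:ℕ)] x = g^[(b:ℕ)] x →
          ∃ n' < 7, g^[n'] x = y := by
        intro a b hab heq
        have hbn : (b : ℕ) ≤ n := by have := b.2; omega
        have key : g^[n] x = g^[(n - (b:ℕ)) + (a:ℕ)] x := by
          conv_lhs => rw [show n = (n - (b:ℕ)) + (b:ℕ) from (Nat.sub_add_cancel hbn).symm]
          rw [Function.iterate_add_apply, Function.iterate_add_apply, heq]
        have hlt' : (n - (b:ℕ)) + (a:ℕ) < n := by omega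
        exact ih _ hlt' y (by rw [← key]; exact hn)
      rcases lt_trichotomy (i:ℕ) (j:ℕ) with hlt | heq | hlt
      · exact hrec i j hlt hij
      · exact absurd (Fin.ext heq) hne
      · exact hrec j i hlt hij.symm

lemma rtg_iter {V : Type*} {A : V → V → Prop} {g : V → V}
    (h : ∀ p q, A p q → q = g p) {x y : V}
    (hxy : Relation.ReflTransGen A x y) : ∃ n, g^[n] x = y := by
  induction hxy with
  | refl => exact ⟨0, rfl⟩
  | tail _ hbc ih =>
      obtain ⟨n, hn⟩ := ih
      exact ⟨n + 1, by rw [Function.iterate_succ_apply', hn, ← h _ _ hbc]⟩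

lemma exists_out {A : Fin 3 × Fin 2 → Fin 3 × Fin 2 → Prop} (hS : IsStrong A)
    (p : Fin 3 × Fin 2) : ∃ q, A p q := by
  have hne : p ≠ (finSucc p.1, p.2) := by
    intro h
    have : p.1 = finSucc p.1 := congrArg Prod.fst h
    revert this
    have : ∀ a : Fin 3, a ≠ finSucc a := by decide
    exact this p.1
  rcases (hS p (finSucc p.1, p.2)).cases_head with h | ⟨b, hb, _⟩
  · exact absurd h hne
  · exact ⟨b, hb⟩

lemma no_bad_choice : ∀ f : Fin 3 × Fin 2 → Fin 2, ¬ BadChoice f := by decide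

theorem stmt_7 : ¬ GoodDecomp Exc1 := by
  rintro ⟨A₁, A₂, hs1, hs2, hdisj, hS1, hS2⟩
  classical
  set f : Fin 3 × Fin 2 → Fin 2 :=
    fun p => if A₁ p (finSucc p.1, 0) then 0 else 1 with hf
  -- A₁ contains the arc p → stepFn f p
  have h1 : ∀ p, A₁ p (stepFn f p) := by
    intro p
    obtain ⟨q, hq⟩ := exists_out hS1 p
    have hq1 : q.1 = finSucc p.1 := hs1 _ _ hq
    by_cases h0 : A₁ p (finSucc p.1, 0)
    · have : stepFn f p = (finSucc p.1, 0) := by simp [stepFn, hf, h0]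
      rw [this]; exact h0
    · have hfp : f p = 1 := by simp [hf, h0]
      have hq2 : q.2 = 1 := by
        obtain ⟨q1, q2⟩ := q
        fin_cases q2
        · exact absurd (by simpa [hq1.symm] using hq : A₁ p (finSucc p.1, 0)) h0
        · rfl
      have : q = stepFn f p := by
        rw [Prod.ext_iff]; exact ⟨hq1, by rw [hq2, stepFn, hfp]⟩
      rw [← this]; exact hq
  -- every out-arc of A₁ at p goes to stepFn f p
  have h1u : ∀ p q, A₁ p q → q = stepFn f p := by
    intro p q hq
    have hq1 : q.1 = finSucc p.1 := hs1 _ _ hq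
    by_contra hne
    -- then q.2 ≠ f p, so {q, stepFn f p} are both targets of A₁ at p
    have hq2 : q.2 ≠ f p := by
      intro h
      exact hne (Prod.ext hq1 h)
    -- A₂ must have an out-arc at p, landing on one of the two targets
    obtain ⟨r, hr⟩ := exists_out hS2 p
    have hr1 : r.1 = finSucc p.1 := hs2 _ _ hr
    have : A₁ p r := by
      by_cases hr2 : r.2 = f p
      · have : r = stepFn f p := Prod.ext hr1 hr2
        rw [this]; exact h1 p
      · have : r = q := Prod.ext (hr1.trans hq1.symm) (fin2_eq_of_ne hr2 hq2)
        rw [this]; exact hq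
    exact hdisj p r ⟨this, hr⟩
  -- every out-arc of A₂ at p goes to stepFn (otherFin2 ∘ f) p
  have h2u : ∀ p q, A₂ p q → q = stepFn (fun p => otherFin2 (f p)) p := by
    intro p q hq
    have hq1 : q.1 = finSucc p.1 := hs2 _ _ hq
    have hq2 : q.2 ≠ f p := by
      intro h
      have hqe : q = stepFn f p := Prod.ext hq1 h
      exact hdisj p q ⟨by rw [hqe]; exact h1 p, hq⟩
    exact Prod.ext hq1 (otherFin2_of_ne hq2)
  -- conclude BadChoice f
  have hb1 : ∀ x y : Fin 3 × Fin 2, ∃ n < 7, (stepFn f)^[n] x = y := fun x y =>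
    iter_bound _ x y (rtg_iter h1u (hS1 x y))
  have hb2 : ∀ x y : Fin 3 × Fin 2, ∃ n < 7,
      (stepFn (fun p => otherFin2 (f p)))^[n] x = y := fun x y =>
    iter_bound _ x y (rtg_iter h2u (hS2 x y))
  exact no_bad_choice f ⟨hb1, hb2⟩
end

section
/- For every integer n ≥ 2, the Cartesian product digraph C_n □ C_n of the directed n-cycle with itself can be decomposed into two arc-disjoint Hamiltonian cycles. -/
namespace Stmt9

open Fin.NatCast Fin.CommRing

variable {m : ℕ}

lemma finSucc_eq_add_one (x : Fin (m+2)) : finSucc x = x + 1 := by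
  ext
  simp [finSucc, Fin.add_def]

def sig1 (p : Fin (m+2) × Fin (m+2)) : Fin (m+2) × Fin (m+2) :=
  if p.1 + p.2 = 0 then (p.1 + 1, p.2) else (p.1, p.2 + 1)

def sig2 (p : Fin (m+2) × Fin (m+2)) : Fin (m+2) × Fin (m+2) :=
  if p.1 + p.2 = 0 then (p.1, p.2 + 1) else (p.1 + 1, p.2)

def emap (t : Fin ((m+2)*(m+2))) : Fin (m+2) × Fin (m+2) :=
  (((((t : ℕ) + (m+1)) / (m+2) : ℕ) : Fin (m+2)),
   ((t : ℕ) : Fin (m+2)) - ((((t : ℕ) + (m+1)) / (m+2) : ℕ) : Fin (m+2)))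

lemma div_helper (a : ℕ) :
    (a + (m+1)) / (m+2) = a / (m+2) + (if a % (m+2) = 0 then 0 else 1) := by
  obtain ⟨q, r, hr, rfl⟩ : ∃ q r, r < m+2 ∧ a = (m+2)*q + r :=
    ⟨a/(m+2), a%(m+2), Nat.mod_lt _ (by omega), (Nat.div_add_mod a (m+2)).symm⟩
  rw [Nat.mul_add_mod]
  rw [show (m+2)*q + r + (m+1) = (m+2)*q + (r + (m+1)) by ring]
  rw [Nat.mul_add_div (by omega), Nat.mul_add_div (by omega),
      Nat.div_eq_of_lt hr, Nat.mod_eq_of_lt hr]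
  by_cases h : r = 0
  · simp [h, Nat.div_eq_of_lt]
  · rw [if_neg h, show r + (m+1) = (r - 1) + (m+2) by omega, Nat.add_div_right _ (by omega),
      Nat.div_eq_of_lt (by omega)]

lemma emap_def (t : Fin ((m+2)*(m+2))) :
    emap t = ((((t : ℕ)/(m+2) + (if (t:ℕ) % (m+2) = 0 then 0 else 1) : ℕ) : Fin (m+2)),
      ((t : ℕ) : Fin (m+2)) - (((t : ℕ)/(m+2) + (if (t:ℕ) % (m+2) = 0 then 0 else 1) : ℕ) : Fin (m+2))) := by
  rw [emap, div_helper]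

lemma cast_ne_zero_of_mod {a : ℕ} (h : a % (m+2) ≠ 0) : (a : Fin (m+2)) ≠ 0 := by
  intro hc
  apply h
  have := Fin.val_natCast a (m+2)
  rw [hc] at this
  simpa using this.symm

lemma cast_eq_zero_of_mod {a : ℕ} (h : a % (m+2) = 0) : (a : Fin (m+2)) = 0 := by
  ext
  rw [Fin.val_natCast a (m+2), h]
  simp

lemma emap_succ (t : Fin ((m+2)*(m+2))) :
    emap (finSucc t) = sig1 (emap t) := by
  have ha : (t : ℕ) < (m+2) * (m+2) := t.isLt
  have hcond : (emap t).1 + (emap t).2 = ((t:ℕ) : Fin (m+2)) := by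
    rw [emap]; ring
  by_cases hw : (t : ℕ) + 1 = (m+2) * (m+2)
  · -- wrap-around case
    have hs : ((finSucc t : Fin ((m+2)*(m+2))) : ℕ) = 0 := by
      simp only [finSucc]
      rw [hw, Nat.mod_self]
    have hval : (t : ℕ) = (m+2) * (m+1) + (m+1) := by
      have e : (m+2)*(m+2) = (m+2)*(m+1) + (m+2) := by ring
      omega
    have hr : (t : ℕ) % (m+2) = m+1 := by
      rw [hval, Nat.mul_add_mod, Nat.mod_eq_of_lt (by omega)]
    have hq : (t : ℕ) / (m+2) = m+1 := by
      rw [hval, Nat.mul_add_div (by omega), Nat.div_eq_of_lt (by omega)]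
    have hc : ((t:ℕ) : Fin (m+2)) ≠ 0 := cast_ne_zero_of_mod (by omega)
    have hL : emap (finSucc t) = (0, 0) := by
      rw [emap_def, hs]
      norm_num
    rw [hL, sig1, hcond, if_neg hc, emap_def, hq, if_neg (by omega)]
    have hnn : (((m+1 + 1 : ℕ)) : Fin (m+2)) = 0 := Fin.natCast_self (m+2)
    have ht1 : (((t:ℕ) : Fin (m+2))) + 1 = 0 := by
      have h2 : (((t:ℕ) + 1 : ℕ) : Fin (m+2)) = 0 := by
        rw [hw]; exact cast_eq_zero_of_mod (Nat.mul_mod_right _ _)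
      rw [← h2]; push_cast; ring
    refine Prod.ext ?_ ?_
    · simpa using hnn
    · simp only [hnn]
      rw [sub_zero]
      exact ht1.symm
  · -- no wrap
    have hs : ((finSucc t : Fin ((m+2)*(m+2))) : ℕ) = (t : ℕ) + 1 := by
      simp only [finSucc]
      exact Nat.mod_eq_of_lt (by omega)
    have hdiv1 : ((t:ℕ) + 1 + (m+1)) / (m+2) = (t:ℕ) / (m+2) + 1 := by
      rw [show (t:ℕ) + 1 + (m+1) = (t:ℕ) + (m+2) by omega, Nat.add_div_right _ (by omega)]
    by_cases hr : (t : ℕ) % (m+2) = 0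
    · have hc : ((t:ℕ) : Fin (m+2)) = 0 := cast_eq_zero_of_mod hr
      rw [sig1, hcond, if_pos hc, emap, hs, hdiv1, emap_def, if_pos hr]
      refine Prod.ext ?_ ?_ <;> simp only
      all_goals (push_cast; try ring)
    · have hc : ((t:ℕ) : Fin (m+2)) ≠ 0 := cast_ne_zero_of_mod hr
      rw [sig1, hcond, if_neg hc, emap, hs, hdiv1, emap_def, if_neg hr]
      refine Prod.ext ?_ ?_ <;> simp only
      all_goals (push_cast; try ring)

lemma emap_inj : Function.Injective (emap (m := m)) := by
  intro s t h
  have hs : (s : ℕ) < (m+2) * (m+2) := s.isLt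
  have ht : (t : ℕ) < (m+2) * (m+2) := t.isLt
  have hqs : (s : ℕ) / (m+2) < (m+2) := (Nat.div_lt_iff_lt_mul (by omega)).2 hs
  have hqt : (t : ℕ) / (m+2) < (m+2) := (Nat.div_lt_iff_lt_mul (by omega)).2 ht
  have h1 := congrArg Prod.fst h
  have h2 := congrArg Prod.snd h
  rw [emap_def, emap_def] at h1 h2
  simp only at h1 h2
  have hst : (((s:ℕ)) : Fin (m+2)) = (((t:ℕ)) : Fin (m+2)) := by
    have h3 : ((s:ℕ) : Fin (m+2)) - (((s : ℕ)/(m+2) + (if (s:ℕ) % (m+2) = 0 then 0 else 1) : ℕ) : Fin (m+2))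
        + (((s : ℕ)/(m+2) + (if (s:ℕ) % (m+2) = 0 then 0 else 1) : ℕ) : Fin (m+2))
        = ((t:ℕ) : Fin (m+2)) - (((t : ℕ)/(m+2) + (if (t:ℕ) % (m+2) = 0 then 0 else 1) : ℕ) : Fin (m+2))
        + (((t : ℕ)/(m+2) + (if (t:ℕ) % (m+2) = 0 then 0 else 1) : ℕ) : Fin (m+2)) := by
      rw [h2, h1]
    simpa using h3
  have hmod : (s : ℕ) % (m+2) = (t : ℕ) % (m+2) := by
    have := congrArg Fin.val hst
    rwa [Fin.val_natCast, Fin.val_natCast] at this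
  rw [hmod] at h1
  have hds := Nat.div_add_mod (s:ℕ) (m+2)
  have hdt := Nat.div_add_mod (t:ℕ) (m+2)
  by_cases hr : (t : ℕ) % (m+2) = 0
  · simp only [if_pos hr, add_zero] at h1
    have := congrArg Fin.val h1
    rw [Fin.val_natCast, Fin.val_natCast, Nat.mod_eq_of_lt hqs, Nat.mod_eq_of_lt hqt] at this
    rw [this, hmod] at hds
    exact Fin.ext (by omega)
  · rw [if_neg hr] at h1
    have hq : (((s:ℕ)/(m+2) : ℕ) : Fin (m+2)) = (((t:ℕ)/(m+2) : ℕ) : Fin (m+2)) := by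
      have h4 : (((s:ℕ)/(m+2) : ℕ) : Fin (m+2)) + 1 = (((t:ℕ)/(m+2) : ℕ) : Fin (m+2)) + 1 := by
        have h1' := h1
        push_cast at h1'
        exact h1'
      exact add_right_cancel h4
    have := congrArg Fin.val hq
    rw [Fin.val_natCast, Fin.val_natCast, Nat.mod_eq_of_lt hqs, Nat.mod_eq_of_lt hqt] at this
    rw [this, hmod] at hds
    exact Fin.ext (by omega)


variable {m : ℕ}

lemma add_one_ne (a : Fin (m+2)) : a + 1 ≠ a := by
  intro h
  have h0 : a + 1 = a + 0 := by rw [add_zero]; exact h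
  have h1 : (1 : Fin (m+2)) = 0 := add_left_cancel h0
  simp [Fin.ext_iff] at h1

lemma cover (x y : Fin (m+2) × Fin (m+2)) :
    CartProd (CycleArc (m+2)) (CycleArc (m+2)) x y ↔ (y = sig1 x ∨ y = sig2 x) := by
  constructor
  · rintro (⟨h1, h2⟩ | ⟨h1, h2⟩)
    · by_cases hc : x.1 + x.2 = 0
      · left; rw [sig1, if_pos hc]
        exact Prod.ext (by rw [h1, finSucc_eq_add_one]) h2.symm
      · right; rw [sig2, if_neg hc]
        exact Prod.ext (by rw [h1, finSucc_eq_add_one]) h2.symm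
    · by_cases hc : x.1 + x.2 = 0
      · right; rw [sig2, if_pos hc]
        exact Prod.ext h1.symm (by rw [h2, finSucc_eq_add_one])
      · left; rw [sig1, if_neg hc]
        exact Prod.ext h1.symm (by rw [h2, finSucc_eq_add_one])
  · have harc1 : ∀ a : Fin (m+2), CycleArc (m+2) a (a + 1) := fun a =>
      (finSucc_eq_add_one a).symm ▸ rfl
    rintro (rfl | rfl)
    · rw [sig1]; by_cases hc : x.1 + x.2 = 0
      · rw [if_pos hc]; exact Or.inl ⟨harc1 x.1, rfl⟩
      · rw [if_neg hc]; exact Or.inr ⟨rfl, harc1 x.2⟩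
    · rw [sig2]; by_cases hc : x.1 + x.2 = 0
      · rw [if_pos hc]; exact Or.inr ⟨rfl, harc1 x.2⟩
      · rw [if_neg hc]; exact Or.inl ⟨harc1 x.1, rfl⟩

lemma sig_ne (x : Fin (m+2) × Fin (m+2)) : sig1 x ≠ sig2 x := by
  unfold sig1 sig2
  split
  · intro h; exact add_one_ne x.1 (congrArg Prod.fst h)
  · intro h; exact add_one_ne x.1 (congrArg Prod.fst h).symm

lemma sig2_swap (p : Fin (m+2) × Fin (m+2)) :
    sig2 (Prod.swap p) = Prod.swap (sig1 p) := by
  rcases p with ⟨a, b⟩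
  unfold sig1 sig2
  by_cases h : a + b = 0
  · have h' : b + a = 0 := by rw [add_comm b a]; exact h
    simp [Prod.swap, h, h']
  · have h' : ¬ b + a = 0 := by rw [add_comm b a]; exact h
    simp [Prod.swap, h, h']

end Stmt9

theorem stmt_9 (n : ℕ) (hn : 2 ≤ n) :
    ∃ A₁ A₂ : Fin n × Fin n → Fin n × Fin n → Prop,
      (∀ x y, CartProd (CycleArc n) (CycleArc n) x y ↔ (A₁ x y ∨ A₂ x y)) ∧
      (∀ x y, ¬ (A₁ x y ∧ A₂ x y)) ∧
      (∃ e : Fin (n * n) ≃ Fin n × Fin n, ∀ x y, A₁ (e x) (e y) ↔ y = finSucc x) ∧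
      (∃ e : Fin (n * n) ≃ Fin n × Fin n, ∀ x y, A₂ (e x) (e y) ↔ y = finSucc x) := by
  obtain ⟨m, rfl⟩ : ∃ m, n = m + 2 := ⟨n - 2, by omega⟩
  refine ⟨fun x y => y = Stmt9.sig1 x, fun x y => y = Stmt9.sig2 x, ?_, ?_, ?_, ?_⟩
  · exact Stmt9.cover
  · rintro x y ⟨h1, h2⟩
    exact Stmt9.sig_ne x (h1 ▸ h2 ▸ rfl)
  · have hbij : Function.Bijective (Stmt9.emap (m := m)) := by
      rw [Fintype.bijective_iff_injective_and_card]
      exact ⟨Stmt9.emap_inj, by simp⟩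
    refine ⟨Equiv.ofBijective _ hbij, fun x y => ?_⟩
    simp only [Equiv.ofBijective_apply]
    constructor
    · intro h
      exact hbij.1 (h.trans (Stmt9.emap_succ x).symm) |>.symm ▸ rfl
    · rintro rfl
      exact Stmt9.emap_succ x
  · have hbij : Function.Bijective (fun t => Prod.swap (Stmt9.emap (m := m) t)) := by
      rw [Fintype.bijective_iff_injective_and_card]
      exact ⟨fun a b h => Stmt9.emap_inj (Prod.swap_injective h), by simp⟩
    refine ⟨Equiv.ofBijective _ hbij, fun x y => ?_⟩
    simp only [Equiv.ofBijective_apply]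
    have key : Prod.swap (Stmt9.emap (m := m) (finSucc x)) =
        Stmt9.sig2 (Prod.swap (Stmt9.emap x)) := by
      rw [Stmt9.sig2_swap, Stmt9.emap_succ]
    constructor
    · intro h
      have := hbij.1 (h.trans key.symm)
      exact this.symm ▸ rfl
    · rintro rfl
      exact key
end

section
/- Let k ≥ 2 be an integer and let G be a strong digraph on at least two vertices having a collection of pairwise arc-disjoint directed cycles covering all its vertices. Then the k-th Cartesian power G^{□k} = G □ G □ ... □ G (k factors) can be decomposed into two arc-disjoint strong spanning subdigraphs. -/
open Fin.NatCast Fin.CommRing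

namespace SqProof

/-- negation on `Fin n` (without typeclass assumptions) -/
def finNeg {n : ℕ} (x : Fin n) : Fin n := ⟨(n - x.val) % n, Nat.mod_lt _ x.pos⟩

/-- iterated successor -/
def itS {n : ℕ} (k : ℕ) (s : Fin n) : Fin n := finSucc^[k] s

variable {V : Type*}

/-- Packaged cycle-cover data for `G`. -/
structure CData (V : Type*) (G : V → V → Prop) where
  K : ℕ
  m : Fin K → ℕ
  c : ∀ i : Fin K, Fin (m i) → V
  hm : ∀ i, 2 ≤ m i
  hinj : ∀ i, Function.Injective (c i)
  harc : ∀ i x, G (c i x) (c i (finSucc x))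
  hsep : ∀ i j x y, c i x = c j y → c i (finSucc x) = c j (finSucc y) → i = j
  canI : V → Fin K
  canP : ∀ v : V, Fin (m (canI v))
  hIP : ∀ v, c (canI v) (canP v) = v

variable {G : V → V → Prop}

/-- An arc of the cycle family. -/
def FStep (D : CData V G) (x y : V) : Prop :=
  ∃ i s, D.c i s = x ∧ D.c i (finSucc s) = y

/-- Reachability along cycle arcs ("same component", by symmetry below). -/
def Rr (D : CData V G) : V → V → Prop := Relation.ReflTransGen (FStep D)

/-- Canonical cycle-successor. -/
def sig (D : CData V G) (v : V) : V := D.c (D.canI v) (finSucc (D.canP v))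

/-- A bridge: a non-cycle arc joining different components. -/
def Bri (D : CData V G) (x y : V) : Prop := G x y ∧ ¬ FStep D x y ∧ ¬ Rr D x y

/-- The escort/ban rule. -/
def piR (D : CData V G) : V × V → V → Prop := fun p z =>
  (∃ i s, D.c i s = p.1 ∧ D.c i (finSucc s) = p.2 ∧ z = D.c i (finNeg s)) ∨
  (p.2 = sig D p.1 ∧ Bri D p.1 z) ∨
  (Bri D p.1 p.2 ∧ z = sig D p.1)

/-- The first part of the decomposition of `G □ G`. -/
def Sys (D : CData V G) : V × V → V × V → Prop := fun p q =>
  (q.2 = p.2 ∧ G p.1 q.1 ∧ ¬ piR D (p.1, q.1) p.2) ∨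
  (q.1 = p.1 ∧ G p.2 q.2 ∧ piR D (p.2, q.2) p.1)

section Basic

variable (D : CData V G)

theorem sig_FStep (v : V) : FStep D v (sig D v) :=
  ⟨D.canI v, D.canP v, D.hIP v, rfl⟩

theorem sig_G (v : V) : G v (sig D v) := by
  have := D.harc (D.canI v) (D.canP v)
  rwa [D.hIP v] at this

theorem sig_Rr (v : V) : Rr D v (sig D v) :=
  Relation.ReflTransGen.single (sig_FStep D v)

theorem FStep_G {x y : V} (h : FStep D x y) : G x y := by
  obtain ⟨i, s, rfl, rfl⟩ := h
  exact D.harc i s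

/-- uniqueness of arc presentations -/
theorem pres_unique {i j : Fin D.K} {s : Fin (D.m i)} {t : Fin (D.m j)}
    (h1 : D.c i s = D.c j t) (h2 : D.c i (finSucc s) = D.c j (finSucc t)) :
    ∃ h : i = j, h ▸ s = t := by
  have hij : i = j := D.hsep i j s t h1 h2
  subst hij
  exact ⟨rfl, D.hinj i h1⟩

theorem reflect_wd {i j : Fin D.K} {s : Fin (D.m i)} {t : Fin (D.m j)}
    (h1 : D.c i s = D.c j t) (h2 : D.c i (finSucc s) = D.c j (finSucc t)) :
    D.c i (finNeg s) = D.c j (finNeg t) := by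
  obtain ⟨h, hst⟩ := pres_unique D h1 h2
  subst h; subst hst; rfl

end Basic

section FinArith

/- arithmetic on `Fin n` positions via the `ZMod`-like ring structure -/

theorem itS_zero {n : ℕ} (s : Fin n) : itS 0 s = s := rfl

theorem itS_succ {n : ℕ} (k : ℕ) (s : Fin n) : itS (k+1) s = finSucc (itS k s) :=
  Function.iterate_succ_apply' _ _ _

theorem finSucc_eq_add_one {n : ℕ} (hn : 2 ≤ n) (x : Fin n) :
    haveI : NeZero n := ⟨by omega⟩
    finSucc x = x + 1 := by
  haveI : NeZero n := ⟨by omega⟩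
  apply Fin.ext
  show (x.val + 1) % n = _
  rw [Fin.add_def]
  congr 1
  have : (1 : Fin n).val = 1 := by
    rw [Fin.val_one', Nat.mod_eq_of_lt (by omega)]
  rw [this]

theorem finNeg_eq_neg {n : ℕ} (hn : 2 ≤ n) (x : Fin n) :
    haveI : NeZero n := ⟨by omega⟩
    finNeg x = -x := by
  haveI : NeZero n := ⟨by omega⟩
  apply Fin.ext
  show (n - x.val) % n = _
  rw [Fin.neg_def]

theorem itS_eq_add_cast {n : ℕ} (hn : 2 ≤ n) (k : ℕ) (s : Fin n) :
    haveI : NeZero n := ⟨by omega⟩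
    itS k s = s + (k : Fin n) := by
  haveI : NeZero n := ⟨by omega⟩
  induction k with
  | zero => simp [itS_zero]
  | succ k ih =>
      rw [itS_succ, ih, finSucc_eq_add_one hn]
      push_cast
      ring

end FinArith

end SqProof

namespace SqProof

variable {V : Type*} {G : V → V → Prop}

section Rfacts

variable (D : CData V G)

theorem Rr_itS (i : Fin D.K) (a : Fin (D.m i)) (k : ℕ) :
    Rr D (D.c i a) (D.c i (itS k a)) := by
  induction k with
  | zero => rw [itS_zero]; exact Relation.ReflTransGen.refl
  | succ k ih =>
      rw [itS_succ]
      exact ih.tail ⟨i, itS k a, rfl, rfl⟩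

theorem Rcyc (i : Fin D.K) (a b : Fin (D.m i)) : Rr D (D.c i a) (D.c i b) := by
  haveI : NeZero (D.m i) := ⟨by have := D.hm i; omega⟩
  have h := Rr_itS D i a (b - a).val
  rwa [itS_eq_add_cast (D.hm i), Fin.cast_val_eq_self, add_sub_cancel] at h

theorem Rsym {x y : V} (h : Rr D x y) : Rr D y x := by
  induction h with
  | refl => exact Relation.ReflTransGen.refl
  | tail _ hstep ih =>
      rename_i b c _
      obtain ⟨i, s, rfl, rfl⟩ := hstep
      exact Relation.ReflTransGen.trans (Rcyc D i (finSucc s) s) ih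

end Rfacts

section PiFacts

variable (D : CData V G)

theorem pi_F_intro (i : Fin D.K) (s : Fin (D.m i)) :
    piR D (D.c i s, D.c i (finSucc s)) (D.c i (finNeg s)) :=
  Or.inl ⟨i, s, rfl, rfl, rfl⟩

theorem pi_F_not {i : Fin D.K} {s : Fin (D.m i)} {z : V}
    (hz1 : z ≠ D.c i (finNeg s))
    (hz2 : D.c i (finSucc s) = sig D (D.c i s) → ¬ Bri D (D.c i s) z) :
    ¬ piR D (D.c i s, D.c i (finSucc s)) z := by
  rintro (⟨j, t, h1, h2, h3⟩ | ⟨hs, hb⟩ | ⟨hb, _⟩)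
  · exact hz1 (h3.trans (reflect_wd D h1 h2))
  · exact hz2 hs hb
  · exact hb.2.1 ⟨i, s, rfl, rfl⟩

theorem pi_F_not_of_R {i : Fin D.K} {s : Fin (D.m i)} {z : V}
    (hR : Rr D (D.c i s) z) (hz1 : z ≠ D.c i (finNeg s)) :
    ¬ piR D (D.c i s, D.c i (finSucc s)) z :=
  pi_F_not D hz1 (fun _ hb => hb.2.2 hR)

theorem pi_bridge_iff {x y z : V} (hb : Bri D x y) :
    piR D (x, y) z ↔ z = sig D x := by
  constructor
  · rintro (⟨i, s, h1, h2, _⟩ | ⟨hs, _⟩ | ⟨_, h⟩)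
    · exact absurd ⟨i, s, h1, h2⟩ hb.2.1
    · exact absurd (show FStep D x y by
        rw [show y = sig D x from hs]; exact sig_FStep D x) hb.2.1
    · exact h
  · intro h
    exact Or.inr (Or.inr ⟨hb, h⟩)

theorem pi_chord_not {x y z : V} (hxy : G x y) (hF : ¬ FStep D x y)
    (hR : Rr D x y) : ¬ piR D (x, y) z := by
  rintro (⟨i, s, h1, h2, _⟩ | ⟨hs, _⟩ | ⟨hb, _⟩)
  · exact hF ⟨i, s, h1, h2⟩
  · exact hF (by rw [show y = sig D x from hs]; exact sig_FStep D x)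
  · exact hb.2.2 hR

theorem rowStep {x y v : V} (h : G x y) (hb : ¬ piR D (x, y) v) :
    Sys D (x, v) (y, v) := Or.inl ⟨rfl, h, hb⟩

theorem colStep {u v w : V} (h : G v w) (hp : piR D (v, w) u) :
    Sys D (u, v) (u, w) := Or.inr ⟨rfl, h, hp⟩

end PiFacts

section Walk

variable (D : CData V G)

/-- Walking the row around a cycle at a fixed same-component column. -/
theorem CW (i : Fin D.K) (k : ℕ) (s : Fin (D.m i)) (v : V)
    (hRv : Rr D (D.c i s) v)
    (hban : ∀ j : ℕ, j < k → v ≠ D.c i (finNeg (itS j s))) :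
    Relation.ReflTransGen (Sys D) (D.c i s, v) (D.c i (itS k s), v) := by
  induction k with
  | zero => rw [itS_zero]
  | succ k ih =>
      refine Relation.ReflTransGen.tail
        (ih (fun j hj => hban j (by omega))) ?_
      rw [itS_succ]
      refine rowStep D (D.harc i (itS k s)) ?_
      refine pi_F_not_of_R D ?_ (hban k (by omega))
      exact Relation.ReflTransGen.trans (Rcyc D i (itS k s) s) hRv

end Walk

end SqProof

namespace SqProof

variable {V : Type*} {G : V → V → Prop}

section MoreFin

theorem val_neg_one {n : ℕ} (hn : 2 ≤ n) :
    haveI : NeZero n := ⟨by omega⟩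
    ((-1 : Fin n)).val = n - 1 := by
  haveI : NeZero n := ⟨by omega⟩
  rw [Fin.neg_def]
  show (n - (1 : Fin n).val) % n = n - 1
  rw [Fin.val_one']
  have h1 : 1 % n = 1 := Nat.mod_eq_of_lt (by omega)
  rw [h1, Nat.mod_eq_of_lt (by omega)]

theorem natCast_sub_one {n : ℕ} (hn : 2 ≤ n) :
    haveI : NeZero n := ⟨by omega⟩
    ((n - 1 : ℕ) : Fin n) = -1 := by
  haveI : NeZero n := ⟨by omega⟩
  apply Fin.ext
  rw [Fin.val_cast_of_lt (by omega), val_neg_one hn]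

theorem finNeg_finNeg {n : ℕ} (hn : 2 ≤ n) (x : Fin n) : finNeg (finNeg x) = x := by
  haveI : NeZero n := ⟨by omega⟩
  rw [finNeg_eq_neg hn, finNeg_eq_neg hn, neg_neg]

end MoreFin

section Sweep

variable (D : CData V G)

/-- One sweep step. -/
theorem L3 (i : Fin D.K) (y : Fin (D.m i)) :
    Relation.ReflTransGen (Sys D)
      (D.c i (finNeg y), D.c i (finSucc y))
      (D.c i (finNeg (finSucc y)), D.c i (finSucc (finSucc y))) := by
  have hn := D.hm i
  haveI : NeZero (D.m i) := ⟨by omega⟩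
  have hend : itS (D.m i - 1) (finNeg y) = finNeg (finSucc y) := by
    rw [itS_eq_add_cast hn, natCast_sub_one hn, finNeg_eq_neg hn, finNeg_eq_neg hn,
      finSucc_eq_add_one hn]
    ring
  have hwalk := CW D i (D.m i - 1) (finNeg y) (D.c i (finSucc y))
    (Rcyc D i (finNeg y) (finSucc y)) ?hban
  case hban =>
    intro j hj hc
    have hfin : finSucc y = finNeg (itS j (finNeg y)) := D.hinj i hc
    rw [itS_eq_add_cast hn, finNeg_eq_neg hn, finNeg_eq_neg hn,
      finSucc_eq_add_one hn] at hfin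
    have h1 : (j : Fin (D.m i)) = -1 := by linear_combination hfin
    have h2 : ((j : Fin (D.m i))).val = j := Fin.val_cast_of_lt (by omega)
    rw [h1, val_neg_one hn] at h2
    omega
  rw [hend] at hwalk
  refine hwalk.tail ?_
  refine colStep D (D.harc i (finSucc y)) ?_
  exact pi_F_intro D i (finSucc y)

theorem L3iter (i : Fin D.K) (k : ℕ) (y : Fin (D.m i)) :
    Relation.ReflTransGen (Sys D)
      (D.c i (finNeg y), D.c i (finSucc y))
      (D.c i (finNeg (itS k y)), D.c i (finSucc (itS k y))) := by
  induction k with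
  | zero => rw [itS_zero]
  | succ k ih =>
      rw [itS_succ]
      exact Relation.ReflTransGen.trans ih (L3 D i (itS k y))

/-- Crossing a reflection-banned cycle arc by a full sweep. -/
theorem cross (i : Fin D.K) (s : Fin (D.m i)) :
    Relation.ReflTransGen (Sys D)
      (D.c i s, D.c i (finNeg s))
      (D.c i (finSucc s), D.c i (finNeg s)) := by
  have hn := D.hm i
  haveI : NeZero (D.m i) := ⟨by omega⟩
  have h1 : Sys D (D.c i s, D.c i (finNeg s)) (D.c i s, D.c i (finSucc (finNeg s))) := by
    have hp := pi_F_intro D i (finNeg s)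
    rw [finNeg_finNeg hn] at hp
    exact colStep D (D.harc i (finNeg s)) hp
  have h2 := L3iter D i (D.m i - 1) (finNeg s)
  have hE : itS (D.m i - 1) (finNeg s) = finNeg (finSucc s) := by
    rw [itS_eq_add_cast hn, natCast_sub_one hn, finNeg_eq_neg hn, finNeg_eq_neg hn,
      finSucc_eq_add_one hn]
    ring
  rw [hE] at h2
  have h3 : finSucc (finNeg (finSucc s)) = finNeg s := by
    rw [finSucc_eq_add_one hn, finNeg_eq_neg hn, finNeg_eq_neg hn,
      finSucc_eq_add_one hn]
    ring
  rw [finNeg_finNeg hn s, finNeg_finNeg hn (finSucc s), h3] at h2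
  exact (Relation.ReflTransGen.single h1).trans h2

/-- Stepping the row along a cycle arc, at any same-component column. -/
theorem step_same {p q v : V} (hF : FStep D p q) (hR : Rr D p v) :
    Relation.ReflTransGen (Sys D) (p, v) (q, v) := by
  obtain ⟨i, s, rfl, rfl⟩ := hF
  by_cases hv : v = D.c i (finNeg s)
  · rw [hv]
    exact cross D i s
  · exact Relation.ReflTransGen.single
      (rowStep D (D.harc i s) (pi_F_not_of_R D hR hv))

/-- Reaching the diagonal from a same-component state. -/
theorem reachDiag {x v : V} (h : Rr D x v) :
    Relation.ReflTransGen (Sys D) (x, v) (v, v) := by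
  induction h using Relation.ReflTransGen.head_induction_on with
  | refl => exact Relation.ReflTransGen.refl
  | head hstep htail ih =>
      rename_i a c
      exact Relation.ReflTransGen.trans
        (step_same D hstep (Relation.ReflTransGen.head hstep htail)) ih

/-- Leaving the diagonal towards any same-component row. -/
theorem fromDiag {v x : V} (h : Rr D v x) :
    Relation.ReflTransGen (Sys D) (v, v) (x, v) := by
  induction h with
  | refl => exact Relation.ReflTransGen.refl
  | tail hchain hstep ih =>
      rename_i p q
      exact Relation.ReflTransGen.trans ih (step_same D hstep (Rsym D hchain))

/-- From a diagonal state, move the row to the canonical successor. -/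
theorem toSig (d : V) :
    Relation.ReflTransGen (Sys D) (d, d) (sig D d, d) := by
  have hd : D.c (D.canI d) (D.canP d) = d := D.hIP d
  by_cases hv : d = D.c (D.canI d) (finNeg (D.canP d))
  · have h := cross D (D.canI d) (D.canP d)
    rw [hd, ← hv] at h
    exact h
  · refine Relation.ReflTransGen.single ?_
    have hb : ¬ piR D (d, sig D d) d := by
      have h := pi_F_not D (i := D.canI d) (s := D.canP d) (z := d)
        hv (fun _ hbr => hbr.2.2 (by rw [hd]; exact Relation.ReflTransGen.refl))
      rw [hd] at h
      exact h
    exact rowStep D (sig_G D d) hb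

end Sweep

end SqProof

namespace SqProof

variable {V : Type*} {G : V → V → Prop}

section Main

variable (D : CData V G)

/-- Diagonal step along a cycle arc. -/
theorem betaF {d e : V} (hF : FStep D d e) :
    Relation.ReflTransGen (Sys D) (d, d) (e, e) := by
  obtain ⟨i, s, rfl, rfl⟩ := hF
  have hn := D.hm i
  haveI : NeZero (D.m i) := ⟨by omega⟩
  set t : Fin (D.m i) := -(s + s) with ht
  have hwalk := CW D i t.val s (D.c i s) Relation.ReflTransGen.refl ?hban
  case hban =>
    intro j hj hc
    have hfin : s = finNeg (itS j s) := D.hinj i hc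
    rw [finNeg_eq_neg hn, itS_eq_add_cast hn] at hfin
    have h1 : (j : Fin (D.m i)) = t := by rw [ht]; linear_combination hfin
    have h2 : ((j : Fin (D.m i))).val = j :=
      Fin.val_cast_of_lt (lt_trans hj t.isLt)
    rw [h1] at h2
    omega
  have hend : itS t.val s = finNeg s := by
    rw [itS_eq_add_cast hn, Fin.cast_val_eq_self, finNeg_eq_neg hn, ht]
    ring
  rw [hend] at hwalk
  have hcol : Sys D (D.c i (finNeg s), D.c i s) (D.c i (finNeg s), D.c i (finSucc s)) :=
    colStep D (D.harc i s) (pi_F_intro D i s)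
  exact (hwalk.tail hcol).trans (reachDiag D (Rcyc D i (finNeg s) (finSucc s)))

/-- Diagonal step along a bridge. -/
theorem betaBr {d e : V} (hb : Bri D d e) :
    Relation.ReflTransGen (Sys D) (d, d) (e, e) := by
  have h1 := toSig D d
  have h2 : Sys D (sig D d, d) (sig D d, e) :=
    colStep D hb.1 ((pi_bridge_iff D hb).mpr rfl)
  have hW : ∀ p, Relation.ReflTransGen (FStep D) p d →
      Relation.ReflTransGen (Sys D) (p, e) (e, e) := by
    intro p hp
    induction hp using Relation.ReflTransGen.head_induction_on with
    | refl =>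
        refine Relation.ReflTransGen.single (rowStep D hb.1 ?_)
        rw [pi_bridge_iff D hb]
        intro hs
        exact hb.2.2 (by rw [hs]; exact sig_Rr D d)
    | head hstep htail ih =>
        rename_i pp pp₁
        obtain ⟨j, t, rfl, rfl⟩ := hstep
        have hRpd : Rr D (D.c j t) d :=
          Relation.ReflTransGen.head ⟨j, t, rfl, rfl⟩ htail
        have hRpe : ¬ Rr D (D.c j t) e := fun hc =>
          hb.2.2 ((Rsym D hRpd).trans hc)
        by_cases hcase : Bri D (D.c j t) e ∧
            D.c j (finSucc t) = sig D (D.c j t)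
        · refine Relation.ReflTransGen.single (rowStep D hcase.1.1 ?_)
          rw [pi_bridge_iff D hcase.1]
          intro hs
          exact hRpe (by rw [hs]; exact sig_Rr D (D.c j t))
        · refine Relation.ReflTransGen.head (rowStep D (D.harc j t) ?_) ih
          refine pi_F_not D ?_ ?_
          · intro hc
            exact hRpe (by rw [hc]; exact Rcyc D j t (finNeg t))
          · intro hsig hbr
            exact hcase ⟨hbr, hsig⟩
  exact (h1.tail h2).trans (hW (sig D d) (Rsym D (sig_Rr D d)))

theorem betaFchain {d e : V} (h : Relation.ReflTransGen (FStep D) d e) :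
    Relation.ReflTransGen (Sys D) (d, d) (e, e) := by
  induction h with
  | refl => exact Relation.ReflTransGen.refl
  | tail _ hstep ih => exact ih.trans (betaF D hstep)

/-- Diagonal transitivity along `G`-paths. -/
theorem beta {d e : V} (h : Relation.ReflTransGen G d e) :
    Relation.ReflTransGen (Sys D) (d, d) (e, e) := by
  induction h with
  | refl => exact Relation.ReflTransGen.refl
  | tail _ hstep ih =>
      rename_i p q _
      refine ih.trans ?_
      by_cases hF : FStep D p q
      · exact betaF D hF
      · by_cases hR : Rr D p q
        · exact betaFchain D hR
        · exact betaBr D ⟨hstep, hF, hR⟩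

/-- Every state reaches the diagonal of its own column. -/
theorem alpha {u v : V} (h : Relation.ReflTransGen G u v) :
    Relation.ReflTransGen (Sys D) (u, v) (v, v) := by
  induction h using Relation.ReflTransGen.head_induction_on with
  | refl => exact Relation.ReflTransGen.refl
  | head hstep htail ih =>
      rename_i p p₁
      by_cases hRv : Rr D p v
      · exact reachDiag D hRv
      · by_cases hF : FStep D p p₁
        · obtain ⟨j, t, rfl, rfl⟩ := hF
          by_cases hcase : D.c j (finSucc t) = sig D (D.c j t) ∧
              Bri D (D.c j t) v
          · refine Relation.ReflTransGen.single (rowStep D hcase.2.1 ?_)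
            rw [pi_bridge_iff D hcase.2]
            intro hs
            exact hRv (by rw [hs]; exact sig_Rr D _)
          · refine Relation.ReflTransGen.head (rowStep D (D.harc j t) ?_) ih
            refine pi_F_not D ?_ ?_
            · intro hc
              exact hRv (by rw [hc]; exact Rcyc D j t (finNeg t))
            · intro hsig hbr
              exact hcase ⟨hsig, hbr⟩
        · by_cases hR : Rr D p p₁
          · exact Relation.ReflTransGen.head
              (rowStep D hstep (pi_chord_not D hstep hF hR)) ih
          · have hb : Bri D p p₁ := ⟨hstep, hF, hR⟩
            refine Relation.ReflTransGen.head (rowStep D hstep ?_) ih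
            rw [pi_bridge_iff D hb]
            intro hs
            exact hRv (by rw [hs]; exact sig_Rr D p)

/-- From the diagonal of a column, every row is reachable. -/
theorem gamma (hG : Irreflexive G) {v₀ q : V} (h : Relation.ReflTransGen G v₀ q) :
    Relation.ReflTransGen (Sys D) (v₀, v₀) (q, v₀) := by
  induction h with
  | refl => exact Relation.ReflTransGen.refl
  | tail hchain hstep ih =>
      rename_i p q
      by_cases hRq : Rr D v₀ q
      · exact fromDiag D hRq
      · by_cases hF : FStep D p q
        · obtain ⟨j, t, rfl, rfl⟩ := hF
          by_cases hcase : D.c j (finSucc t) = sig D (D.c j t) ∧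
              Bri D (D.c j t) v₀
          · -- FORM A
            have hβ := beta D hchain
            have h1 := toSig D (D.c j t)
            have h2 : Sys D (sig D (D.c j t), D.c j t) (sig D (D.c j t), v₀) :=
              colStep D hcase.2.1 (Or.inr (Or.inr ⟨hcase.2, rfl⟩))
            rw [hcase.1]
            exact hβ.trans (h1.tail h2)
          · refine Relation.ReflTransGen.tail ih (rowStep D (D.harc j t) ?_)
            refine pi_F_not D ?_ ?_
            · intro hc
              exact hRq (by rw [hc]; exact Rcyc D j (finNeg t) (finSucc t))
            · intro hsig hbr
              exact hcase ⟨hsig, hbr⟩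
        · by_cases hR : Rr D p q
          · exact Relation.ReflTransGen.tail ih
              (rowStep D hstep (pi_chord_not D hstep hF hR))
          · have hb : Bri D p q := ⟨hstep, hF, hR⟩
            by_cases hv : v₀ = sig D p
            · -- FORM B
              have hβ := beta D hchain
              have h1 : Sys D (p, p) (q, p) := by
                refine rowStep D hstep ?_
                rw [pi_bridge_iff D hb]
                intro hs
                have hsg := sig_G D p
                rw [← hs] at hsg
                exact hG p hsg
              have h2 : Sys D (q, p) (q, v₀) := by
                refine colStep D ?_ (Or.inr (Or.inl ⟨hv, hb⟩))
                rw [hv]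
                exact sig_G D p
              exact hβ.trans ((Relation.ReflTransGen.single h1).tail h2)
            · refine Relation.ReflTransGen.tail ih (rowStep D hstep ?_)
              rw [pi_bridge_iff D hb]
              exact hv

/-- The first half of the decomposition is strong. -/
theorem sysStrong (hG : Irreflexive G) (hGs : IsStrong G) : IsStrong (Sys D) := by
  rintro ⟨u, v⟩ ⟨u', v'⟩
  exact ((alpha D (hGs u v)).trans (beta D (hGs v v'))).trans
    (gamma D hG (hGs v' u'))

end Main

end SqProof

namespace SqProof

variable {V : Type*} {G : V → V → Prop}

section Assemble

variable (D : CData V G)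

theorem sys_sub {p q : V × V} (h : Sys D p q) : CartProd G G p q := by
  obtain ⟨a, b⟩ := p
  obtain ⟨c, d⟩ := q
  rcases h with ⟨h1, h2, -⟩ | ⟨h1, h2, -⟩
  · exact Or.inl ⟨h2, h1.symm⟩
  · exact Or.inr ⟨h1.symm, h2⟩

theorem sysSwap (hG : Irreflexive G) {a b c d : V} (h : Sys D (a, b) (c, d)) :
    CartProd G G (b, a) (d, c) ∧ ¬ Sys D (b, a) (d, c) := by
  rcases h with ⟨h1, h2, h3⟩ | ⟨h1, h2, h3⟩
  · simp only at h1 h2 h3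
    constructor
    · exact Or.inr ⟨h1.symm, h2⟩
    · rintro (⟨g1, g2, g3⟩ | ⟨g1, g2, g3⟩)
      · simp only at g1 g2
        rw [g1] at h2
        exact hG a h2
      · simp only at g3
        exact h3 g3
  · simp only at h1 h2 h3
    constructor
    · exact Or.inl ⟨h2, h1.symm⟩
    · rintro (⟨g1, g2, g3⟩ | ⟨g1, g2, g3⟩)
      · simp only at g3
        exact g3 h3
      · simp only at g1
        rw [g1] at h2
        exact hG b h2

end Assemble

end SqProof

/-- The square case: `G □ G` has a good decomposition. -/
theorem square_good' {V : Type*} (G : V → V → Prop)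
    (hG : Irreflexive G) (hGs : IsStrong G)
    (hcover : ∃ (k : ℕ) (m : Fin k → ℕ) (c : ∀ i : Fin k, Fin (m i) → V),
      (∀ i, 2 ≤ m i) ∧ (∀ i, Function.Injective (c i)) ∧
      (∀ i x, G (c i x) (c i (finSucc x))) ∧
      (∀ i j x y, c i x = c j y → c i (finSucc x) = c j (finSucc y) → i = j) ∧
      (∀ v : V, ∃ i x, c i x = v)) :
    ∃ A₁ A₂ : (V × V) → (V × V) → Prop,
      (∀ x y, A₁ x y → CartProd G G x y) ∧ (∀ x y, A₂ x y → CartProd G G x y) ∧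
      (∀ x y, ¬ (A₁ x y ∧ A₂ x y)) ∧ IsStrong A₁ ∧ IsStrong A₂ := by
  classical
  obtain ⟨K, m, c, hm, hinj, harc, hsep, hcov⟩ := hcover
  let D : SqProof.CData V G :=
    { K := K, m := m, c := c, hm := hm, hinj := hinj, harc := harc, hsep := hsep,
      canI := fun v => (hcov v).choose,
      canP := fun v => (hcov v).choose_spec.choose,
      hIP := fun v => (hcov v).choose_spec.choose_spec }
  refine ⟨SqProof.Sys D, fun p q => CartProd G G p q ∧ ¬ SqProof.Sys D p q,
    fun p q h => SqProof.sys_sub D h, fun _ _ h => h.1,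
    fun x y h => h.2.2 h.1, SqProof.sysStrong D hG hGs, ?_⟩
  intro p q
  have hpath := SqProof.sysStrong D hG hGs (p.2, p.1) (q.2, q.1)
  have hmap : ∀ a b : V × V, SqProof.Sys D a b →
      (CartProd G G (a.2, a.1) (b.2, b.1) ∧ ¬ SqProof.Sys D (a.2, a.1) (b.2, b.1)) := by
    rintro ⟨a1, a2⟩ ⟨b1, b2⟩ h
    exact SqProof.sysSwap D hG h
  have hlift := Relation.ReflTransGen.lift
    (p := fun x y : V × V => CartProd G G x y ∧ ¬ SqProof.Sys D x y)
    (fun x : V × V => (x.2, x.1)) hmap _ _ hpath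
  simpa using hlift



/-- The square case: `G □ G` has a good decomposition. -/
theorem square_good {V : Type*} (G : V → V → Prop)
    (hG : Irreflexive G) (hGs : IsStrong G) (hcover : HasCycleCover G) :
    GoodDecomp (CartProd G G) :=
  square_good' G hG hGs hcover

section Reduction

variable {V : Type*} (G : V → V → Prop)

/-- The lift of a square relation `B` with "station" `s`. -/
def liftRel (G : V → V → Prop) {k : ℕ} (i0 i1 : Fin k)
    (B : (V × V) → (V × V) → Prop) (s : V × V) :
    (Fin k → V) → (Fin k → V) → Prop :=
  fun f g =>
    (B (f i0, f i1) (g i0, g i1) ∧ ∀ j, j ≠ i0 → j ≠ i1 → f j = g j) ∨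
    ((f i0, f i1) = s ∧ ∃ j, j ≠ i0 ∧ j ≠ i1 ∧ G (f j) (g j) ∧ ∀ i, i ≠ j → f i = g i)

theorem cartPow_good {k : ℕ} (hk : 2 ≤ k) (hG : Irreflexive G) (hGs : IsStrong G)
    (hsq : GoodDecomp (CartProd G G)) (a b : V) (hab : a ≠ b) :
    GoodDecomp (CartPow G k) := by
  classical
  obtain ⟨B₁, B₂, hB₁, hB₂, hdisj, hS₁, hS₂⟩ := hsq
  set i0 : Fin k := ⟨0, by omega⟩ with hi0
  set i1 : Fin k := ⟨1, by omega⟩ with hi1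
  have hne : i0 ≠ i1 := by simp [hi0, hi1, Fin.ext_iff]
  -- update the 0,1 coordinates
  let updP : (Fin k → V) → (V × V) → (Fin k → V) :=
    fun f s => Function.update (Function.update f i0 s.1) i1 s.2
  have updP_i0 : ∀ f s, updP f s i0 = s.1 := by
    intro f s
    simp only [updP, Function.update_of_ne hne, Function.update_self]
  have updP_i1 : ∀ f s, updP f s i1 = s.2 := by
    intro f s; simp only [updP, Function.update_self]
  have updP_other : ∀ f s j, j ≠ i0 → j ≠ i1 → updP f s j = f j := by
    intro f s j h0 h1
    simp only [updP, Function.update_of_ne h1, Function.update_of_ne h0]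
  have updP_updP : ∀ f s t, updP (updP f s) t = updP f t := by
    intro f s t; funext j
    by_cases h1 : j = i1
    · subst h1; rw [updP_i1, updP_i1]
    by_cases h0 : j = i0
    · subst h0; rw [updP_i0, updP_i0]
    · rw [updP_other _ _ _ h0 h1, updP_other _ _ _ h0 h1, updP_other _ _ _ h0 h1]
  have updP_self : ∀ f, updP f (f i0, f i1) = f := by
    intro f; funext j
    by_cases h1 : j = i1
    · subst h1; rw [updP_i1]
    by_cases h0 : j = i0
    · subst h0; rw [updP_i0]
    · rw [updP_other _ _ _ h0 h1]
  -- sub-relation property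
  have sub_lift : ∀ (B : (V×V) → (V×V) → Prop) (s : V × V),
      (∀ x y, B x y → CartProd G G x y) →
      ∀ f g, liftRel G i0 i1 B s f g → CartPow G k f g := by
    intro B s hB f g hfg
    rcases hfg with ⟨hB01, hrest⟩ | ⟨-, j, hj0, hj1, hGj, hrest⟩
    · rcases hB _ _ hB01 with ⟨hG0, h11⟩ | ⟨h00, hG1⟩
      · exact ⟨i0, hG0, fun j hj => by
          by_cases h1 : j = i1
          · subst h1; exact h11
          · exact hrest j hj h1⟩
      · exact ⟨i1, hG1, fun j hj => by
          by_cases h0 : j = i0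
          · subst h0; exact h00
          · exact hrest j h0 hj⟩
    · exact ⟨j, hGj, hrest⟩
  -- strongness of lifts
  have strong_lift : ∀ (B : (V×V) → (V×V) → Prop) (s : V × V),
      IsStrong B → IsStrong (liftRel G i0 i1 B s) := by
    intro B s hBs
    have pairStep : ∀ (f : Fin k → V) (y : V × V), B (f i0, f i1) y →
        liftRel G i0 i1 B s f (updP f y) := by
      intro f y hBy
      left
      refine ⟨?_, fun j hj0 hj1 => (updP_other f y j hj0 hj1).symm⟩
      rw [updP_i0, updP_i1]
      exact hBy
    have pairPath : ∀ (f : Fin k → V) (y : V × V),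
        Relation.ReflTransGen B (f i0, f i1) y →
        Relation.ReflTransGen (liftRel G i0 i1 B s) f (updP f y) := by
      intro f y h
      induction h with
      | refl => rw [updP_self]
      | @tail c d hxc hcd ih =>
          have step : liftRel G i0 i1 B s (updP f c) (updP (updP f c) d) := by
            apply pairStep
            rw [updP_i0, updP_i1]
            exact hcd
          rw [updP_updP] at step
          exact ih.tail step
    have coordPath : ∀ (j : Fin k), j ≠ i0 → j ≠ i1 → ∀ (f : Fin k → V) (c : V),
        (f i0, f i1) = s →
        Relation.ReflTransGen G (f j) c →
        Relation.ReflTransGen (liftRel G i0 i1 B s) f (Function.update f j c) := by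
      intro j hj0 hj1 f c hs h
      induction h with
      | refl => rw [Function.update_eq_self]
      | @tail c d hxc hcd ih =>
          refine ih.tail ?_
          right
          refine ⟨?_, j, hj0, hj1, ?_, ?_⟩
          · rw [Function.update_of_ne (Ne.symm hj0), Function.update_of_ne (Ne.symm hj1)]
            exact hs
          · rw [Function.update_self, Function.update_self]
            exact hcd
          · intro i hi
            rw [Function.update_of_ne hi, Function.update_of_ne hi]
    have syncTails : ∀ (n : ℕ) (f g : Fin k → V),
        (f i0, f i1) = s → (g i0, g i1) = s →
        (Finset.univ.filter fun j => f j ≠ g j).card ≤ n →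
        Relation.ReflTransGen (liftRel G i0 i1 B s) f g := by
      intro n
      induction n with
      | zero =>
          intro f g hf hg hcard
          have hfg : f = g := by
            funext j
            by_contra hj
            have hmem : j ∈ Finset.univ.filter fun j => f j ≠ g j := by
              simp [hj]
            have := Finset.card_pos.mpr ⟨j, hmem⟩
            omega
          rw [hfg]
      | succ n ih =>
          intro f g hf hg hcard
          rcases Finset.eq_empty_or_nonempty
              (Finset.univ.filter fun j => f j ≠ g j) with hempty | ⟨j, hj⟩
          · have hfg : f = g := by
              funext j
              by_contra hjj
              have hmem : j ∈ Finset.univ.filter fun j => f j ≠ g j := by simp [hjj]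
              rw [hempty] at hmem
              exact absurd hmem (Finset.notMem_empty j)
            rw [hfg]
          · have hfgj : f j ≠ g j := by
              simpa using (Finset.mem_filter.mp hj).2
            have hpair : (f i0, f i1) = (g i0, g i1) := hf.trans hg.symm
            have h0eq : f i0 = g i0 := by injection hpair
            have h1eq : f i1 = g i1 := by
              injection hpair with h1 h2
            have hj0 : j ≠ i0 := fun h => hfgj (h ▸ h0eq)
            have hj1 : j ≠ i1 := fun h => hfgj (h ▸ h1eq)
            have step := coordPath j hj0 hj1 f (g j) hf (hGs _ _)
            refine Relation.ReflTransGen.trans step (ih _ g ?_ hg ?_)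
            · rw [Function.update_of_ne (Ne.symm hj0), Function.update_of_ne (Ne.symm hj1)]
              exact hf
            · have hsub : (Finset.univ.filter
                  fun i => Function.update f j (g j) i ≠ g i) ⊆
                  (Finset.univ.filter fun i => f i ≠ g i).erase j := by
                intro i hi
                simp only [Finset.mem_filter, Finset.mem_univ, true_and] at hi
                rcases eq_or_ne i j with rfl | hij
                · rw [Function.update_self] at hi
                  exact absurd rfl hi
                · refine Finset.mem_erase.mpr ⟨hij, ?_⟩
                  simp only [Finset.mem_filter, Finset.mem_univ, true_and]
                  rwa [Function.update_of_ne hij] at hi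
              have h1 := Finset.card_le_card hsub
              have h2 := Finset.card_erase_lt_of_mem hj
              omega
    intro f g
    have hf' : ((updP f s) i0, (updP f s) i1) = s := by rw [updP_i0, updP_i1]
    have hg' : ((updP g s) i0, (updP g s) i1) = s := by rw [updP_i0, updP_i1]
    have t1 : Relation.ReflTransGen (liftRel G i0 i1 B s) f (updP f s) :=
      pairPath f s (hBs _ s)
    have t2 : Relation.ReflTransGen (liftRel G i0 i1 B s) (updP f s) (updP g s) :=
      syncTails _ _ _ hf' hg' le_rfl
    have t3 : Relation.ReflTransGen (liftRel G i0 i1 B s) (updP g s)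
        (updP (updP g s) (g i0, g i1)) := by
      apply pairPath
      rw [hg']
      exact hBs s (g i0, g i1)
    rw [updP_updP, updP_self] at t3
    exact (t1.trans t2).trans t3
  -- assemble
  refine ⟨liftRel G i0 i1 B₁ (a, a), liftRel G i0 i1 B₂ (b, b),
    sub_lift B₁ (a,a) hB₁, sub_lift B₂ (b,b) hB₂, ?_, strong_lift B₁ (a,a) hS₁,
    strong_lift B₂ (b,b) hS₂⟩
  rintro f g ⟨h1, h2⟩
  rcases h1 with ⟨hB1, hrest1⟩ | ⟨hs1, j1, hj10, hj11, hGj1, hrest1⟩ <;>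
    rcases h2 with ⟨hB2, hrest2⟩ | ⟨hs2, j2, hj20, hj21, hGj2, hrest2⟩
  · exact hdisj _ _ ⟨hB1, hB2⟩
  · -- B₁ arc on the pair, but the pair coordinates are equal by the second move
    have h0 : f i0 = g i0 := hrest2 i0 (fun h => hj20 h.symm)
    have h1 : f i1 = g i1 := hrest2 i1 (fun h => hj21 h.symm)
    rcases hB₁ _ _ hB1 with ⟨hGf, -⟩ | ⟨-, hGf⟩
    · rw [h0] at hGf; exact hG _ hGf
    · rw [h1] at hGf; exact hG _ hGf
  · have h0 : f i0 = g i0 := hrest1 i0 (fun h => hj10 h.symm)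
    have h1 : f i1 = g i1 := hrest1 i1 (fun h => hj11 h.symm)
    rcases hB₂ _ _ hB2 with ⟨hGf, -⟩ | ⟨-, hGf⟩
    · rw [h0] at hGf; exact hG _ hGf
    · rw [h1] at hGf; exact hG _ hGf
  · have : (a, a) = ((b : V), (b : V)) := hs1.symm.trans hs2
    injection this with h _
    exact hab h

end Reduction

theorem stmt_12 {V : Type*} [Fintype V] [Nontrivial V] (k : ℕ) (hk : 2 ≤ k)
    (G : V → V → Prop) (hG : Irreflexive G) (hGs : IsStrong G)
    (hcover : HasCycleCover G) :
    GoodDecomp (CartPow G k) := by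
  obtain ⟨a, b, hab⟩ := exists_pair_ne V
  exact cartPow_good G hk hG hGs (square_good G hG hGs hcover) a b hab
end
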